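/- arXiv:2101.09128 — 3 statements merged into one kernel-verified Lean document; each statement's English description precedes it below -/
import Mathlib

section
/- Let X be a real Banach space, I = [a,b] a compact interval and F: I×X → X a Carathéodory function. Assume there exists p ∈ [1,∞] such that for every bounded set B ⊂ X there are functions m_B ∈ L^p(I) and L_B ∈ L¹(I) with ‖F(t,x)‖ ≤ m_B(t) for a.e. t ∈ I and all x ∈ B, and ‖F(t,x) − F(t,y)‖ ≤ L_B(t)·‖x − y‖ for a.e. t ∈ I and all x,y ∈ B. Then for every t₀ ∈ I, x₀ ∈ X and R > 0 there exists δ > 0 such that, with I_δ = [t₀−δ, t₀+δ] ∩ I, for every initial value y₀ in the closed ball of radius R around x₀ there exists a unique continuous function x: I_δ → X satisfying x(t) = y₀ + ∫_{t₀}^t F(s, x(s)) ds for all t ∈ I_δ; moreover the function t ↦ F(t, x(t)) belongs to L^p(I_δ, X). -/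
open MeasureTheory Set
open scoped ENNReal


lemma step_aesm {X : Type*} [NormedAddCommGroup X] {μ : Measure ℝ} (G : ℝ → ℝ → X)
    (s : ℝ → ℝ) (hs : Measurable s) (hr : (range s).Countable)
    (hG : ∀ v, AEStronglyMeasurable (fun t => G t v) μ) :
    AEStronglyMeasurable (fun t => G t (s t)) μ := by
  haveI : Countable (range s) := hr.to_subtype
  have hcover : univ ⊆ ⋃ v : range s, s ⁻¹' {(v : ℝ)} := fun t _ =>
    mem_iUnion.2 ⟨⟨s t, mem_range_self t⟩, rfl⟩
  have h1 : AEStronglyMeasurable (fun t => G t (s t))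
      (μ.restrict (⋃ v : range s, s ⁻¹' {(v : ℝ)})) := by
    rw [aestronglyMeasurable_iUnion_iff]
    intro v
    have hmeasset : MeasurableSet (s ⁻¹' {(v : ℝ)}) := hs (measurableSet_singleton _)
    have heq : (fun t => G t v) =ᶠ[ae (μ.restrict (s ⁻¹' {(v : ℝ)}))]
        (fun t => G t (s t)) :=
      Filter.eventuallyEq_of_mem (self_mem_ae_restrict hmeasset)
        (fun t ht => by rw [show s t = (v : ℝ) from ht])
    exact ((hG v).mono_measure Measure.restrict_le_self).congr heq
  have hle : μ.restrict univ ≤ μ.restrict (⋃ v : range s, s ⁻¹' {(v : ℝ)}) :=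
    Measure.restrict_mono hcover le_rfl
  rw [Measure.restrict_univ] at hle
  exact h1.mono_measure hle
open scoped ENNReal
set_option maxHeartbeats 1000000

/-- Carathéodory composition: if `x` is continuous on `Icc c d ⊆ Icc a b`, then
`t ↦ F t (x t)` is a.e. strongly measurable on `Icc c d`. -/
lemma caratheodory_comp_aesm {X : Type*} [NormedAddCommGroup X]
    {a b c d : ℝ} (hsub : Icc c d ⊆ Icc a b)
    {F : ℝ → X → X}
    (hFmeas : ∀ x : X, AEStronglyMeasurable (fun t => F t x) (volume.restrict (Icc a b)))
    (hFcont : ∀ᵐ t ∂(volume.restrict (Icc a b)), Continuous (fun x => F t x))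
    {x : ℝ → X} (hx : ContinuousOn x (Icc c d)) :
    AEStronglyMeasurable (fun t => F t (x t)) (volume.restrict (Icc c d)) := by
  rcases le_or_gt c d with hcd | hcd
  swap
  · rw [Icc_eq_empty hcd.not_ge, Measure.restrict_empty]
    exact aestronglyMeasurable_zero_measure _
  -- step approximations of the identity on `Icc c d`
  set clamp : ℝ → ℝ := fun v => max c (min d v) with hclamp
  have hclamp_mem : ∀ v, clamp v ∈ Icc c d := fun v =>
    ⟨le_max_left _ _, max_le (by exact hcd) (min_le_left _ _)⟩
  have hclamp_cont : Continuous clamp := continuous_const.max (continuous_const.min continuous_id)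
  set s : ℕ → ℝ → ℝ := fun n t => clamp ((⌊t * (n + 1)⌋ : ℝ) / (n + 1)) with hs
  have hsmem : ∀ n t, s n t ∈ Icc c d := fun n t => hclamp_mem _
  have hsmeas : ∀ n, Measurable (s n) := by
    intro n
    apply hclamp_cont.measurable.comp
    exact ((measurable_from_top.comp ((measurable_id.mul_const _).floor)).div_const _)
  have hsdist : ∀ n, ∀ t ∈ Icc c d, |s n t - t| ≤ 1 / (n + 1) := by
    intro n t ht
    have hn : (0:ℝ) < n + 1 := by positivity
    have h1 : (⌊t * (n + 1)⌋ : ℝ) / (n + 1) ≤ t := by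
      rw [div_le_iff₀ hn]; exact Int.floor_le _
    have h2 : t - 1 / (n + 1) ≤ (⌊t * (n + 1)⌋ : ℝ) / (n + 1) := by
      rw [sub_le_iff_le_add, ← add_div, le_div_iff₀ hn]
      linarith [Int.lt_floor_add_one (t * (n + 1))]
    set v := (⌊t * (n + 1)⌋ : ℝ) / (n + 1)
    have hv : s n t = max c v := by
      rw [hs]; simp only [clamp]
      rw [min_eq_right (h1.trans ht.2)]
    rw [hv]
    rcases le_total c v with h | h
    · rw [max_eq_right h, abs_le]; constructor <;> linarith
    · rw [max_eq_left h, abs_le]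
      constructor
      · linarith [ht.1]
      · linarith [ht.1, hn.le]
  have hstendsto : ∀ t ∈ Icc c d, Filter.Tendsto (fun n => s n t) Filter.atTop (nhds t) := by
    intro t ht
    rw [Metric.tendsto_atTop]
    intro ε hε
    obtain ⟨N, hN⟩ := exists_nat_gt (1 / ε)
    refine ⟨N, fun n hn => ?_⟩
    have h1 : (1:ℝ) / (n + 1) < ε := by
      rw [div_lt_iff₀ (by positivity)]
      rw [div_lt_iff₀ hε] at hN
      have : (N:ℝ) ≤ n := by exact_mod_cast hn
      nlinarith
    calc dist (s n t) t = |s n t - t| := rfl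
      _ ≤ 1 / (n + 1) := hsdist n t ht
      _ < ε := h1
  have haesm : ∀ n, AEStronglyMeasurable (fun t => F t (x (s n t))) (volume.restrict (Icc c d)) := by
    intro n
    have hrange : (range (s n)).Countable := by
      have hsr : range (s n) ⊆ clamp '' (range fun k : ℤ => (k : ℝ) / (n + 1)) := by
        rintro _ ⟨t, rfl⟩
        exact ⟨(⌊t * (n + 1)⌋ : ℝ) / (n + 1), ⟨⌊t * (n + 1)⌋, rfl⟩, rfl⟩
      exact ((countable_range _).image _).mono hsr
    exact step_aesm (fun t v => F t (x v)) (s n) (hsmeas n) hrange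
      (fun v => (hFmeas (x v)).mono_measure (Measure.restrict_mono hsub le_rfl))
  -- a.e. convergence
  have hcont' : ∀ᵐ t ∂(volume.restrict (Icc c d)), Continuous (fun y => F t y) :=
    ae_restrict_of_ae_restrict_of_subset hsub hFcont
  have hmem : ∀ᵐ t ∂(volume.restrict (Icc c d)), t ∈ Icc c d :=
    ae_restrict_mem measurableSet_Icc
  have htendsto : ∀ᵐ t ∂(volume.restrict (Icc c d)),
      Filter.Tendsto (fun n => F t (x (s n t))) Filter.atTop (nhds (F t (x t))) := by
    filter_upwards [hcont', hmem] with t hc ht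
    have hxtendsto : Filter.Tendsto (fun n => x (s n t)) Filter.atTop (nhds (x t)) := by
      have h1 : Filter.Tendsto (fun n => s n t) Filter.atTop (nhdsWithin t (Icc c d)) := by
        rw [tendsto_nhdsWithin_iff]
        exact ⟨hstendsto t ht, Filter.Eventually.of_forall fun n => hsmem n t⟩
      exact (hx t ht).tendsto.comp h1
    exact (hc.tendsto (x t)).comp hxtendsto
  -- conclude
  exact aestronglyMeasurable_of_tendsto_ae Filter.atTop haesm htendsto

lemma exists_small_integral {g : ℝ → ℝ} {a b : ℝ} (hg : IntegrableOn g (Icc a b))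
    (t₀ : ℝ) {ε : ℝ} (hε : 0 < ε) :
    ∃ δ : ℝ, 0 < δ ∧ ∫ s in Icc (t₀ - δ) (t₀ + δ) ∩ Icc a b, g s < ε := by
  set S : ℕ → Set ℝ := fun n => Icc (t₀ - 1/(n+1)) (t₀ + 1/(n+1)) ∩ Icc a b with hS
  have hmeas : ∀ n, MeasurableSet (S n) := fun n => measurableSet_Icc.inter measurableSet_Icc
  have hanti : Antitone S := by
    intro n m hnm
    apply inter_subset_inter_left
    apply Icc_subset_Icc
    · have : 1/((m:ℝ)+1) ≤ 1/((n:ℝ)+1) := by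
        apply one_div_le_one_div_of_le (by positivity)
        exact_mod_cast Nat.add_le_add_right hnm 1
      linarith
    · have : 1/((m:ℝ)+1) ≤ 1/((n:ℝ)+1) := by
        apply one_div_le_one_div_of_le (by positivity)
        exact_mod_cast Nat.add_le_add_right hnm 1
      linarith
  have hint : ∃ n, IntegrableOn g (S n) := ⟨0, hg.mono_set inter_subset_right⟩
  have htends := tendsto_setIntegral_of_antitone hmeas hanti hint
  have hnull : volume (⋂ n, S n) = 0 := by
    refine measure_mono_null ?_ (measure_singleton t₀)
    intro t ht
    simp only [mem_iInter, hS, mem_inter_iff, mem_Icc] at ht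
    have h1 : ∀ n : ℕ, |t - t₀| ≤ 1/(n+1) := by
      intro n
      obtain ⟨⟨h1', h2'⟩, _⟩ := ht n
      rw [abs_le]; constructor <;> linarith
    have : t = t₀ := by
      by_contra h
      have habs : 0 < |t - t₀| := abs_pos.2 (sub_ne_zero.2 h)
      obtain ⟨n, hn⟩ := exists_nat_gt (1 / |t - t₀|)
      have h2 := h1 n
      rw [div_lt_iff₀ habs] at hn
      have h3 : (1:ℝ)/(n+1) < |t - t₀| := by
        rw [div_lt_iff₀ (by positivity)]
        nlinarith [habs]
      linarith
    simp [this]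
  rw [show ∫ s in ⋂ n, S n, g s = 0 from by
    rw [Measure.restrict_eq_zero.2 hnull, integral_zero_measure]] at htends
  have := htends.eventually (eventually_lt_nhds hε)
  obtain ⟨n, hn⟩ := this.exists
  refine ⟨1/(n+1), by positivity, ?_⟩
  exact hn

lemma norm_intervalIntegral_le_of_le {X : Type*} [NormedAddCommGroup X] [NormedSpace ℝ X]
    {u : ℝ → X} {h : ℝ → ℝ} {c d t₁ t : ℝ}
    (ht₁ : t₁ ∈ Icc c d) (ht : t ∈ Icc c d)
    (hu : IntegrableOn u (Icc c d)) (hh : IntegrableOn h (Icc c d))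
    (hbound : ∀ᵐ s ∂(volume.restrict (Icc c d)), ‖u s‖ ≤ h s) :
    ‖∫ s in t₁..t, u s‖ ≤ ∫ s in Icc c d, h s := by
  have hsub : Set.uIoc t₁ t ⊆ Icc c d := by
    refine Set.Ioc_subset_Icc_self.trans (Icc_subset_Icc ?_ ?_)
    · exact le_min ht₁.1 ht.1
    · exact max_le ht₁.2 ht.2
  calc ‖∫ s in t₁..t, u s‖ ≤ ∫ s in Set.uIoc t₁ t, ‖u s‖ :=
        intervalIntegral.norm_integral_le_integral_norm_uIoc
    _ ≤ ∫ s in Icc c d, ‖u s‖ := by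
        apply setIntegral_mono_set hu.norm
        · exact Filter.Eventually.of_forall fun s => norm_nonneg _
        · exact HasSubset.Subset.eventuallyLE hsub
    _ ≤ ∫ s in Icc c d, h s := integral_mono_ae hu.norm hh hbound

lemma uIcc_sub_Icc {c d t₁ t : ℝ} (hcd : c ≤ d) (ht₁ : t₁ ∈ Icc c d) (ht : t ∈ Icc c d) :
    uIcc t₁ t ⊆ Icc c d := by
  rw [← uIcc_of_le hcd] at ht₁ ht ⊢
  exact uIcc_subset_uIcc ht₁ ht

lemma II_of_Icc {X : Type*} [NormedAddCommGroup X] {u : ℝ → X} {c d t₁ t : ℝ} (hcd : c ≤ d)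
    (hu : IntegrableOn u (Icc c d)) (ht₁ : t₁ ∈ Icc c d) (ht : t ∈ Icc c d) :
    IntervalIntegrable u volume t₁ t :=
  (hu.mono_set (uIcc_sub_Icc hcd ht₁ ht)).intervalIntegrable

/-- Local existence and uniqueness for the Banach-space valued ODE `x' = F(t,x)`
(Theorem B.2 of the paper): for a Carathéodory right-hand side `F` that is locally
bounded by `L^p` functions and locally Lipschitz with `L¹` Lipschitz functions on
bounded sets, around every `t₀ ∈ I`, `x₀ ∈ X` and `R > 0` there is `δ > 0` such that
for every initial value `y₀` in the closed ball of radius `R` around `x₀` there is a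
unique continuous solution of `x(t) = y₀ + ∫_{t₀}^t F(s, x(s)) ds` on
`I_δ = [t₀−δ, t₀+δ] ∩ I`, and `t ↦ F(t, x(t)) ∈ L^p(I_δ, X)`. -/
theorem banach_ode_local_existence
    {X : Type*} [NormedAddCommGroup X] [NormedSpace ℝ X] [CompleteSpace X]
    {a b : ℝ} (hab : a ≤ b)
    (F : ℝ → X → X)
    (hFmeas : ∀ x : X, AEStronglyMeasurable (fun t => F t x) (volume.restrict (Icc a b)))
    (hFcont : ∀ᵐ t ∂(volume.restrict (Icc a b)), Continuous (fun x => F t x))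
    (p : ℝ≥0∞) (hp : 1 ≤ p)
    (hbound : ∀ B : Set X, Bornology.IsBounded B →
      ∃ m L : ℝ → ℝ, MemLp m p (volume.restrict (Icc a b)) ∧
        IntegrableOn L (Icc a b) ∧
        (∀ᵐ t ∂(volume.restrict (Icc a b)), ∀ x ∈ B, ‖F t x‖ ≤ m t) ∧
        (∀ᵐ t ∂(volume.restrict (Icc a b)), ∀ x ∈ B, ∀ y ∈ B,
          ‖F t x - F t y‖ ≤ L t * ‖x - y‖)) :
    ∀ t₀ ∈ Icc a b, ∀ x₀ : X, ∀ R : ℝ, 0 < R →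
      ∃ δ > 0,
        ∀ y₀ ∈ Metric.closedBall x₀ R,
          ∃ x : ℝ → X,
            (ContinuousOn x (Icc (t₀ - δ) (t₀ + δ) ∩ Icc a b) ∧
              (∀ t ∈ Icc (t₀ - δ) (t₀ + δ) ∩ Icc a b,
                x t = y₀ + ∫ s in t₀..t, F s (x s)) ∧
              MemLp (fun t => F t (x t)) p
                (volume.restrict (Icc (t₀ - δ) (t₀ + δ) ∩ Icc a b))) ∧
            ∀ x' : ℝ → X,
              ContinuousOn x' (Icc (t₀ - δ) (t₀ + δ) ∩ Icc a b) →
              (∀ t ∈ Icc (t₀ - δ) (t₀ + δ) ∩ Icc a b,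
                x' t = y₀ + ∫ s in t₀..t, F s (x' s)) →
              ∀ t ∈ Icc (t₀ - δ) (t₀ + δ) ∩ Icc a b, x' t = x t := by
  intro t₀ ht₀ x₀ R hR
  haveI : IsFiniteMeasure (volume.restrict (Icc a b)) :=
    ⟨by rw [Measure.restrict_apply_univ]; exact measure_Icc_lt_top⟩
  obtain ⟨m, L, hm, hL, hmB, hLB⟩ :=
    hbound (Metric.closedBall x₀ (R + 1)) Metric.isBounded_closedBall
  have hmInt : IntegrableOn m (Icc a b) := hm.integrable hp
  set g : ℝ → ℝ := fun t => |m t| + |L t| with hgdef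
  have hgInt : IntegrableOn g (Icc a b) := hmInt.abs.add hL.abs
  have hgnn : ∀ t, 0 ≤ g t := fun t => add_nonneg (abs_nonneg _) (abs_nonneg _)
  obtain ⟨δ, hδpos, hgsmall⟩ := exists_small_integral hgInt t₀ (ε := 1/2) (by norm_num)
  refine ⟨δ, hδpos, ?_⟩
  intro y₀ hy₀
  set c : ℝ := (t₀ - δ) ⊔ a with hc
  set d : ℝ := (t₀ + δ) ⊓ b with hd
  have hJ : Icc (t₀ - δ) (t₀ + δ) ∩ Icc a b = Icc c d := Icc_inter_Icc
  have hsub : Icc c d ⊆ Icc a b := by rw [← hJ]; exact inter_subset_right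
  have htc : c ≤ t₀ := sup_le (by linarith) ht₀.1
  have htd : t₀ ≤ d := le_inf (by linarith) ht₀.2
  have hcd : c ≤ d := htc.trans htd
  have ht₀J : t₀ ∈ Icc c d := ⟨htc, htd⟩
  rw [hJ] at hgsmall
  -- the extension operator
  set ext : C(↥(Icc c d), X) → ℝ → X := fun f t => f (projIcc c d hcd t) with hextdef
  have hext_cont : ∀ f, Continuous (ext f) := fun f => f.continuous.comp continuous_projIcc
  have hext_eq : ∀ (f : C(↥(Icc c d), X)) (t : ℝ) (ht : t ∈ Icc c d), ext f t = f ⟨t, ht⟩ :=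
    fun f t ht => by simp only [hextdef, projIcc_of_mem hcd ht]
  -- the invariant set
  set K : Set C(↥(Icc c d), X) :=
    {f | ∀ s : ↥(Icc c d), f s ∈ Metric.closedBall x₀ (R + 1)} with hKdef
  -- integrability of the composed integrand for functions with values in the ball
  have hint : ∀ f ∈ K, IntegrableOn (fun s => F s (ext f s)) (Icc c d) := by
    intro f hf
    refine Integrable.mono' (hgInt.mono_set hsub)
      (caratheodory_comp_aesm hsub hFmeas hFcont (hext_cont f).continuousOn) ?_
    filter_upwards [ae_restrict_of_ae_restrict_of_subset hsub hmB] with s hs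
    calc ‖F s (ext f s)‖ ≤ m s := hs _ (hf (projIcc c d hcd s))
      _ ≤ g s := (le_abs_self _).trans (le_add_of_nonneg_right (abs_nonneg _))
  -- norm bound for integrands
  have hFbound : ∀ f ∈ K, ∀ᵐ s ∂(volume.restrict (Icc c d)), ‖F s (ext f s)‖ ≤ g s := by
    intro f hf
    filter_upwards [ae_restrict_of_ae_restrict_of_subset hsub hmB] with s hs
    calc ‖F s (ext f s)‖ ≤ m s := hs _ (hf (projIcc c d hcd s))
      _ ≤ g s := (le_abs_self _).trans (le_add_of_nonneg_right (abs_nonneg _))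
  have hghalf : ∫ s in Icc c d, g s ≤ 1/2 := hgsmall.le
  -- continuity of the Picard map
  have hprim : ∀ f ∈ K,
      Continuous fun t : ↥(Icc c d) => y₀ + ∫ s in t₀..(t:ℝ), F s (ext f s) := by
    intro f hf
    have h1 : ContinuousOn (fun t : ℝ => y₀ + ∫ s in t₀..t, F s (ext f s)) (Icc c d) := by
      apply continuousOn_const.add
      have := intervalIntegral.continuousOn_primitive_interval' (f := fun s => F s (ext f s)) (μ := volume) (a := t₀)
        (b₁ := c) (b₂ := d) ?_ ?_
      · rwa [uIcc_of_le hcd] at this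
      · exact ((hint f hf).mono_set (by rw [uIcc_of_le hcd])).intervalIntegrable
      · rwa [uIcc_of_le hcd]
    exact h1.restrict
  -- invariance of the ball
  have hinv : ∀ f ∈ K, ∀ t : ↥(Icc c d),
      y₀ + ∫ s in t₀..(t:ℝ), F s (ext f s) ∈ Metric.closedBall x₀ (R + 1) := by
    intro f hf t
    have hnorm : ‖∫ s in t₀..(t:ℝ), F s (ext f s)‖ ≤ ∫ s in Icc c d, g s :=
      norm_intervalIntegral_le_of_le ht₀J t.2 (hint f hf) (hgInt.mono_set hsub) (hFbound f hf)
    rw [Metric.mem_closedBall]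
    calc dist (y₀ + ∫ s in t₀..(t:ℝ), F s (ext f s)) x₀
        ≤ dist (y₀ + ∫ s in t₀..(t:ℝ), F s (ext f s)) y₀ + dist y₀ x₀ := dist_triangle _ _ _
      _ = ‖∫ s in t₀..(t:ℝ), F s (ext f s)‖ + dist y₀ x₀ := by
          rw [dist_eq_norm, add_sub_cancel_left]
      _ ≤ 1/2 + R := add_le_add (hnorm.trans hghalf) (Metric.mem_closedBall.1 hy₀)
      _ ≤ R + 1 := by linarith
  -- the Picard map
  set Φ : ↥K → ↥K := fun f =>
    ⟨⟨fun t => y₀ + ∫ s in t₀..(t:ℝ), F s (ext f.1 s), hprim f.1 f.2⟩,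
      fun t => hinv f.1 f.2 t⟩ with hΦdef
  -- contraction estimate
  have hlip : LipschitzWith (1/2 : NNReal) Φ := by
    refine LipschitzWith.of_dist_le_mul fun f f' => ?_
    have hD : (0:ℝ) ≤ dist f f' := dist_nonneg
    rw [Subtype.dist_eq, ContinuousMap.dist_le (by positivity)]
    intro t
    have hII : IntervalIntegrable (fun s => F s (ext f.1 s)) volume t₀ t :=
      II_of_Icc hcd (hint f.1 f.2) ht₀J t.2
    have hII' : IntervalIntegrable (fun s => F s (ext f'.1 s)) volume t₀ t :=
      II_of_Icc hcd (hint f'.1 f'.2) ht₀J t.2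
    have heq : dist ((Φ f).1 t) ((Φ f').1 t) =
        ‖∫ s in t₀..(t:ℝ), (F s (ext f.1 s) - F s (ext f'.1 s))‖ := by
      rw [hΦdef]
      simp only [ContinuousMap.coe_mk]
      rw [dist_eq_norm, intervalIntegral.integral_sub hII hII', add_sub_add_left_eq_sub]
    rw [heq]
    have hbnd : ∀ᵐ s ∂(volume.restrict (Icc c d)),
        ‖F s (ext f.1 s) - F s (ext f'.1 s)‖ ≤ |L s| * dist f f' := by
      filter_upwards [ae_restrict_of_ae_restrict_of_subset hsub hLB] with s hs
      have h1 : ‖F s (ext f.1 s) - F s (ext f'.1 s)‖ ≤ L s * ‖ext f.1 s - ext f'.1 s‖ :=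
        hs _ (f.2 (projIcc c d hcd s)) _ (f'.2 (projIcc c d hcd s))
      have h2 : ‖ext f.1 s - ext f'.1 s‖ ≤ dist f f' := by
        rw [← dist_eq_norm, Subtype.dist_eq]
        exact ContinuousMap.dist_apply_le_dist _
      calc ‖F s (ext f.1 s) - F s (ext f'.1 s)‖ ≤ L s * ‖ext f.1 s - ext f'.1 s‖ := h1
        _ ≤ |L s| * ‖ext f.1 s - ext f'.1 s‖ :=
            mul_le_mul_of_nonneg_right (le_abs_self _) (norm_nonneg _)
        _ ≤ |L s| * dist f f' := mul_le_mul_of_nonneg_left h2 (abs_nonneg _)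
    have hest : ‖∫ s in t₀..(t:ℝ), (F s (ext f.1 s) - F s (ext f'.1 s))‖ ≤
        ∫ s in Icc c d, |L s| * dist f f' :=
      norm_intervalIntegral_le_of_le ht₀J t.2 ((hint f.1 f.2).sub (hint f'.1 f'.2))
        ((IntegrableOn.mono_set hL.abs hsub).mul_const _) hbnd
    have hLhalf : ∫ s in Icc c d, |L s| ≤ 1/2 := by
      refine le_trans ?_ hghalf
      apply integral_mono_ae (IntegrableOn.mono_set hL.abs hsub) (hgInt.mono_set hsub)
      exact Filter.Eventually.of_forall fun s =>
        le_add_of_nonneg_left (abs_nonneg _)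
    calc ‖∫ s in t₀..(t:ℝ), (F s (ext f.1 s) - F s (ext f'.1 s))‖
        ≤ ∫ s in Icc c d, |L s| * dist f f' := hest
      _ = (∫ s in Icc c d, |L s|) * dist f f' := by rw [integral_mul_const]
      _ ≤ 1/2 * dist f f' := mul_le_mul_of_nonneg_right hLhalf hD
      _ = ((1/2 : NNReal) : ℝ) * dist f f' := by norm_num
  have hcontr : ContractingWith (1/2 : NNReal) Φ := ⟨by rw [← NNReal.coe_lt_coe]; norm_num, hlip⟩
  haveI : Nonempty ↥K :=
    ⟨⟨ContinuousMap.const _ y₀, fun s => by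
      rw [ContinuousMap.const_apply, Metric.mem_closedBall]
      exact (Metric.mem_closedBall.1 hy₀).trans (by linarith)⟩⟩
  have hKclosed : IsClosed K := by
    have : K = ⋂ s : ↥(Icc c d), {f : C(↥(Icc c d), X) | f s ∈ Metric.closedBall x₀ (R + 1)} := by
      ext f; simp [hKdef, mem_iInter]
    rw [this]
    exact isClosed_iInter fun s =>
      (Metric.isClosed_closedBall.preimage (continuous_eval_const s))
  haveI : CompleteSpace ↥K := hKclosed.completeSpace_coe
  -- the fixed point
  set xhat : ↥K := hcontr.fixedPoint Φ with hxhat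
  have hfix : Φ xhat = xhat := hcontr.fixedPoint_isFixedPt
  set xsol : ℝ → X := ext xhat.1 with hxsol
  have hxsol_cont : Continuous xsol := hext_cont _
  have hxsol_eq : ∀ t ∈ Icc c d, xsol t = y₀ + ∫ s in t₀..t, F s (xsol s) := by
    intro t ht
    have h1 : xsol t = xhat.1 ⟨t, ht⟩ := hext_eq _ t ht
    have h2 : (Φ xhat).1 ⟨t, ht⟩ = xhat.1 ⟨t, ht⟩ := by rw [hfix]
    rw [h1, ← h2, hΦdef]
    rfl
  refine ⟨xsol, ⟨?_, ?_, ?_⟩, ?_⟩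
  · rw [hJ]; exact hxsol_cont.continuousOn
  · intro t ht; rw [hJ] at ht; exact hxsol_eq t ht
  · rw [hJ]
    refine MemLp.of_le (hm.mono_measure (Measure.restrict_mono hsub le_rfl))
      (caratheodory_comp_aesm hsub hFmeas hFcont hxsol_cont.continuousOn) ?_
    filter_upwards [ae_restrict_of_ae_restrict_of_subset hsub hmB] with s hs
    exact (hs _ (xhat.2 (projIcc c d hcd s))).trans (Real.le_norm_self _)
  -- uniqueness
  · intro x' hx'c hx'eq
    rw [hJ] at hx'c hx'eq ⊢
    have hx'img : IsCompact (x' '' Icc c d) := isCompact_Icc.image_of_continuousOn hx'c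
    obtain ⟨m2, L2, hm2, hL2, hm2B, hL2B⟩ :=
      hbound (Metric.closedBall x₀ (R + 1) ∪ x' '' Icc c d)
        (Metric.isBounded_closedBall.union hx'img.isBounded)
    have hxmem : ∀ s : ℝ, xsol s ∈ Metric.closedBall x₀ (R + 1) ∪ x' '' Icc c d :=
      fun s => Or.inl (xhat.2 _)
    have hx'mem : ∀ s ∈ Icc c d, x' s ∈ Metric.closedBall x₀ (R + 1) ∪ x' '' Icc c d :=
      fun s hs => Or.inr ⟨s, hs, rfl⟩
    have hm2Int : IntegrableOn m2 (Icc a b) := hm2.integrable hp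
    have hIx : IntegrableOn (fun s => F s (xsol s)) (Icc c d) := by
      refine Integrable.mono' (IntegrableOn.mono_set hm2Int.abs hsub)
        (caratheodory_comp_aesm hsub hFmeas hFcont hxsol_cont.continuousOn) ?_
      filter_upwards [ae_restrict_of_ae_restrict_of_subset hsub hm2B] with s hs
      exact (hs _ (hxmem s)).trans (le_abs_self _)
    have hIx' : IntegrableOn (fun s => F s (x' s)) (Icc c d) := by
      refine Integrable.mono' (IntegrableOn.mono_set hm2Int.abs hsub)
        (caratheodory_comp_aesm hsub hFmeas hFcont hx'c) ?_
      filter_upwards [ae_restrict_of_ae_restrict_of_subset hsub hm2B,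
        ae_restrict_mem measurableSet_Icc] with s hs hsmem
      exact (hs _ (hx'mem s hsmem)).trans (le_abs_self _)
    haveI : PreconnectedSpace ↥(Icc c d) := Subtype.preconnectedSpace isPreconnected_Icc
    set S : Set ↥(Icc c d) := {t | x' ↑t = xsol ↑t} with hSdef
    have hSne : S.Nonempty := by
      refine ⟨⟨t₀, ht₀J⟩, ?_⟩
      show x' t₀ = xsol t₀
      rw [hx'eq t₀ ht₀J, hxsol_eq t₀ ht₀J, intervalIntegral.integral_same,
        intervalIntegral.integral_same]
    have hSclosed : IsClosed S :=
      isClosed_eq hx'c.restrict (hxsol_cont.comp continuous_subtype_val)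
    have hSopen : IsOpen S := by
      rw [isOpen_iff_forall_mem_open]
      intro t₁ ht₁S
      obtain ⟨ε, hεpos, hεsmall⟩ :=
        exists_small_integral hL2.abs (t₁ : ℝ) (ε := 1/2) (by norm_num)
      set c' : ℝ := ((t₁ : ℝ) - ε) ⊔ c with hc'
      set d' : ℝ := ((t₁ : ℝ) + ε) ⊓ d with hd'
      have hJ' : Icc ((t₁ : ℝ) - ε) ((t₁ : ℝ) + ε) ∩ Icc c d = Icc c' d' := Icc_inter_Icc
      have hsub' : Icc c' d' ⊆ Icc c d := by rw [← hJ']; exact inter_subset_right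
      have ht₁c' : c' ≤ (t₁ : ℝ) := sup_le (by linarith) t₁.2.1
      have ht₁d' : (t₁ : ℝ) ≤ d' := le_inf (by linarith) t₁.2.2
      have hc'd' : c' ≤ d' := ht₁c'.trans ht₁d'
      have ht₁mem : (t₁ : ℝ) ∈ Icc c' d' := ⟨ht₁c', ht₁d'⟩
      have hL2small : ∫ s in Icc c' d', |L2 s| < 1/2 := by
        refine lt_of_le_of_lt ?_ hεsmall
        apply setIntegral_mono_set (IntegrableOn.mono_set hL2.abs inter_subset_right)
          (Filter.Eventually.of_forall fun s => abs_nonneg _)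
        refine HasSubset.Subset.eventuallyLE ?_
        rw [← hJ']
        exact inter_subset_inter_right _ hsub
      -- representation of the difference on `Icc c' d'`
      have hrep : ∀ t ∈ Icc c' d',
          x' t - xsol t = ∫ s in (t₁ : ℝ)..t, (F s (x' s) - F s (xsol s)) := by
        intro t ht'
        have htJ : t ∈ Icc c d := hsub' ht'
        have h1 : x' t - x' (t₁ : ℝ) = ∫ s in (t₁ : ℝ)..t, F s (x' s) := by
          rw [hx'eq t htJ, hx'eq (t₁ : ℝ) t₁.2, add_sub_add_left_eq_sub]
          exact intervalIntegral.integral_interval_sub_left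
            (II_of_Icc hcd hIx' ht₀J htJ) (II_of_Icc hcd hIx' ht₀J t₁.2)
        have h2 : xsol t - xsol (t₁ : ℝ) = ∫ s in (t₁ : ℝ)..t, F s (xsol s) := by
          rw [hxsol_eq t htJ, hxsol_eq (t₁ : ℝ) t₁.2, add_sub_add_left_eq_sub]
          exact intervalIntegral.integral_interval_sub_left
            (II_of_Icc hcd hIx ht₀J htJ) (II_of_Icc hcd hIx ht₀J t₁.2)
        have h3 : x' (t₁ : ℝ) = xsol (t₁ : ℝ) := ht₁S
        rw [intervalIntegral.integral_sub (II_of_Icc hcd hIx' t₁.2 htJ)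
          (II_of_Icc hcd hIx t₁.2 htJ), ← h1, ← h2, h3]
        abel
      -- maximum of the difference on `Icc c' d'`
      obtain ⟨τ, hτmem, hτmax⟩ := isCompact_Icc.exists_isMaxOn ⟨(t₁ : ℝ), ht₁mem⟩
        (((hx'c.mono hsub').sub (hxsol_cont.continuousOn.mono hsub')).norm
          : ContinuousOn (fun t => ‖x' t - xsol t‖) (Icc c' d'))
      have hMnn : (0:ℝ) ≤ ‖x' τ - xsol τ‖ := norm_nonneg _
      have hq : 0 ≤ ∫ s in Icc c' d', |L2 s| :=
        setIntegral_nonneg measurableSet_Icc fun s _ => abs_nonneg _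
      have hbnd : ∀ᵐ s ∂(volume.restrict (Icc c' d')),
          ‖F s (x' s) - F s (xsol s)‖ ≤ |L2 s| * ‖x' τ - xsol τ‖ := by
        filter_upwards [ae_restrict_of_ae_restrict_of_subset (hsub'.trans hsub) hL2B,
          ae_restrict_mem measurableSet_Icc] with s hs hsmem
        have h1 : ‖F s (x' s) - F s (xsol s)‖ ≤ L2 s * ‖x' s - xsol s‖ :=
          hs _ (hx'mem s (hsub' hsmem)) _ (hxmem s)
        have h2 : ‖x' s - xsol s‖ ≤ ‖x' τ - xsol τ‖ := hτmax hsmem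
        calc ‖F s (x' s) - F s (xsol s)‖ ≤ L2 s * ‖x' s - xsol s‖ := h1
          _ ≤ |L2 s| * ‖x' s - xsol s‖ :=
              mul_le_mul_of_nonneg_right (le_abs_self _) (norm_nonneg _)
          _ ≤ |L2 s| * ‖x' τ - xsol τ‖ := mul_le_mul_of_nonneg_left h2 (abs_nonneg _)
      have hMest : ‖x' τ - xsol τ‖ ≤
          (∫ s in Icc c' d', |L2 s|) * ‖x' τ - xsol τ‖ := by
        conv_lhs => rw [hrep τ hτmem]
        calc ‖∫ s in (t₁ : ℝ)..τ, (F s (x' s) - F s (xsol s))‖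
            ≤ ∫ s in Icc c' d', |L2 s| * ‖x' τ - xsol τ‖ :=
              norm_intervalIntegral_le_of_le ht₁mem hτmem
                (IntegrableOn.mono_set (hIx'.sub hIx) hsub')
                ((IntegrableOn.mono_set hL2.abs (hsub'.trans hsub)).mul_const _) hbnd
          _ = (∫ s in Icc c' d', |L2 s|) * ‖x' τ - xsol τ‖ := by rw [integral_mul_const]
      have hM0 : ‖x' τ - xsol τ‖ = 0 := by
        have h1 : (∫ s in Icc c' d', |L2 s|) * ‖x' τ - xsol τ‖ ≤
            (1/2) * ‖x' τ - xsol τ‖ :=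
          mul_le_mul_of_nonneg_right hL2small.le hMnn
        nlinarith
      have hzero : ∀ t ∈ Icc c' d', x' t = xsol t := by
        intro t ht'
        have h4 : ‖x' t - xsol t‖ ≤ ‖x' τ - xsol τ‖ := hτmax ht'
        rw [hM0] at h4
        have h5 := le_antisymm h4 (norm_nonneg _)
        rwa [norm_eq_zero, sub_eq_zero] at h5
      refine ⟨Subtype.val ⁻¹' Ioo ((t₁ : ℝ) - ε) ((t₁ : ℝ) + ε), ?_, ?_, ?_⟩
      · intro t ht
        show x' ↑t = xsol ↑t
        refine hzero _ ⟨sup_le ht.1.le t.2.1, le_inf ht.2.le t.2.2⟩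
      · exact isOpen_Ioo.preimage continuous_subtype_val
      · exact ⟨by linarith, by linarith⟩
    have hSuniv : S = univ := IsClopen.eq_univ ⟨hSclosed, hSopen⟩ hSne
    intro t ht
    have : (⟨t, ht⟩ : ↥(Icc c d)) ∈ S := by rw [hSuniv]; exact mem_univ _
    exact this
end

section
/- Let I_δ ⊂ ℝ be a compact interval containing t₀, θ > 0, and K: I_δ×ℝ → ℝ a function such that K(t,y) ≥ 0 for all t ∈ I_δ whenever y ≥ 0. Suppose x: I_δ → ℝ is continuous, x(t₀) ∈ [0,θ], the function s ↦ K(s, x(s))·(1 − x(s)/θ) is Lebesgue integrable on I_δ, and x(t) = x(t₀) + ∫_{t₀}^t K(s, x(s))·(1 − x(s)/θ) ds for all t ∈ I_δ. If x(s₀) ∈ (0, θ] for some s₀ ∈ I_δ, then x(t) ∈ [x(s₀), θ] for all t ∈ I_δ with t ≥ s₀. -/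
open MeasureTheory Set

/-- Lower barrier / monotone trapping for the logistic-type ODE `x' = K(t,x)(1 − x/θ)`:
if `K(t,y) ≥ 0` whenever `y ≥ 0`, `x` is a continuous solution of the integral
equation on the compact interval `I_δ = [α, β] ∋ t₀` with `x(t₀) ∈ [0, θ]`, and
`x(s₀) ∈ (0, θ]` for some `s₀ ∈ I_δ`, then `x(t) ∈ [x(s₀), θ]` for all `t ∈ I_δ`
with `t ≥ s₀`. -/
theorem lower_barrier
    {α β t₀ θ : ℝ} (hαβ : α ≤ β) (ht₀ : t₀ ∈ Icc α β) (hθ : 0 < θ)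
    (K : ℝ → ℝ → ℝ)
    (hK : ∀ t ∈ Icc α β, ∀ y : ℝ, 0 ≤ y → 0 ≤ K t y)
    (x : ℝ → ℝ) (hxc : ContinuousOn x (Icc α β))
    (hx0 : x t₀ ∈ Icc 0 θ)
    (hint : IntegrableOn (fun s => K s (x s) * (1 - x s / θ)) (Icc α β))
    (hsol : ∀ t ∈ Icc α β, x t = x t₀ + ∫ s in t₀..t, K s (x s) * (1 - x s / θ)) :
    ∀ s₀ ∈ Icc α β, x s₀ ∈ Ioc 0 θ →
      ∀ t ∈ Icc α β, s₀ ≤ t → x t ∈ Icc (x s₀) θ := by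
  set f : ℝ → ℝ := fun s => K s (x s) * (1 - x s / θ) with hfdef
  have hii : ∀ u ∈ Icc α β, ∀ v ∈ Icc α β, IntervalIntegrable f volume u v := by
    intro u hu v hv
    exact (hint.mono_set (uIcc_subset_Icc hu hv)).intervalIntegrable
  have hstep : ∀ u ∈ Icc α β, ∀ v ∈ Icc α β, x v = x u + ∫ s in u..v, f s := by
    intro u hu v hv
    have h1 := hsol u hu
    have h2 := hsol v hv
    have h3 := intervalIntegral.integral_interval_sub_left (hii t₀ ht₀ v hv) (hii t₀ ht₀ u hu)
    simp only [hfdef] at h3 ⊢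
    linarith
  -- Upper barrier: once below θ, stays below θ.
  have hupper : ∀ u ∈ Icc α β, x u ≤ θ → ∀ v ∈ Icc α β, u ≤ v → x v ≤ θ := by
    intro u hu hxu v hv huv
    by_contra hlt
    push_neg at hlt
    have hsub : Icc u v ⊆ Icc α β := Icc_subset_Icc hu.1 hv.2
    have hcx : ContinuousOn x (Icc u v) := hxc.mono hsub
    have hivt : θ ∈ x '' Icc u v := intermediate_value_Icc huv hcx ⟨hxu, hlt.le⟩
    set T : Set ℝ := Icc u v ∩ x ⁻¹' {θ} with hT
    have hTne : T.Nonempty := by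
      obtain ⟨σ, hσ, hσeq⟩ := hivt
      exact ⟨σ, hσ, by simpa using hσeq⟩
    have hTclosed : IsClosed T := hcx.preimage_isClosed_of_isClosed isClosed_Icc isClosed_singleton
    have hTbdd : BddAbove T := ⟨v, fun s hs => hs.1.2⟩
    set τ := sSup T with hτ
    have hτmem : τ ∈ T := hTclosed.csSup_mem hTne hTbdd
    have hτx : x τ = θ := hτmem.2
    have hτv : τ ≤ v := hτmem.1.2
    have huτ : u ≤ τ := hτmem.1.1
    -- on [τ, v], x ≥ θ
    have hge : ∀ s ∈ Icc τ v, θ ≤ x s := by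
      intro s hs
      by_contra hxs
      push_neg at hxs
      have hsv : s ≤ v := hs.2
      have hivt2 : θ ∈ x '' Icc s v :=
        intermediate_value_Icc hsv (hcx.mono (Icc_subset_Icc (huτ.trans hs.1) le_rfl))
          ⟨hxs.le, hlt.le⟩
      obtain ⟨σ, hσ, hσeq⟩ := hivt2
      have hσT : σ ∈ T := ⟨⟨huτ.trans (hs.1.trans hσ.1), hσ.2⟩, by simpa using hσeq⟩
      have : σ ≤ τ := le_csSup hTbdd hσT
      have hτs : τ ≤ s := hs.1
      have : σ = s := le_antisymm (this.trans hτs) hσ.1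
      rw [← this] at hxs
      rw [hσeq] at hxs
      exact lt_irrefl _ hxs
    have hf_nonpos : ∀ s ∈ Icc τ v, f s ≤ 0 := by
      intro s hs
      have hsαβ : s ∈ Icc α β := ⟨hu.1.trans (huτ.trans hs.1), hs.2.trans hv.2⟩
      have hxge : θ ≤ x s := hge s hs
      have hKs : 0 ≤ K s (x s) := hK s hsαβ _ (hθ.le.trans hxge)
      have h1 : 1 - x s / θ ≤ 0 := by
        rw [sub_nonpos, le_div_iff₀ hθ]
        linarith
      exact mul_nonpos_of_nonneg_of_nonpos hKs h1
    have hneg : 0 ≤ ∫ s in τ..v, -f s :=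
      intervalIntegral.integral_nonneg hτv (fun u hu => neg_nonneg.mpr (hf_nonpos u hu))
    rw [intervalIntegral.integral_neg] at hneg
    have hint_le : (∫ s in τ..v, f s) ≤ 0 := by linarith
    have hταβ : τ ∈ Icc α β := hsub hτmem.1
    have := hstep τ hταβ v hv
    rw [hτx] at this
    linarith
  -- Now the main statement.
  intro s₀ hs₀ hxs₀ t ht hst
  have hxt_le : x t ≤ θ := hupper s₀ hs₀ hxs₀.2 t ht hst
  refine ⟨?_, hxt_le⟩
  by_contra hlow
  push_neg at hlow
  set c : ℝ := max (x t) 0 with hc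
  have hclt : c < x s₀ := max_lt hlow hxs₀.1
  have hsub : Icc s₀ t ⊆ Icc α β := Icc_subset_Icc hs₀.1 ht.2
  have hcx : ContinuousOn x (Icc s₀ t) := hxc.mono hsub
  have hivt : c ∈ x '' Icc s₀ t :=
    intermediate_value_Icc' hst hcx ⟨le_max_left _ _, hclt.le⟩
  set T : Set ℝ := Icc s₀ t ∩ x ⁻¹' {c} with hT
  have hTne : T.Nonempty := by
    obtain ⟨σ, hσ, hσeq⟩ := hivt
    exact ⟨σ, hσ, by simpa using hσeq⟩
  have hTclosed : IsClosed T := hcx.preimage_isClosed_of_isClosed isClosed_Icc isClosed_singleton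
  have hTbdd : BddBelow T := ⟨s₀, fun s hs => hs.1.1⟩
  set τ := sInf T with hτ
  have hτmem : τ ∈ T := hTclosed.csInf_mem hTne hTbdd
  have hτx : x τ = c := hτmem.2
  have hs₀τ : s₀ ≤ τ := hτmem.1.1
  have hτt : τ ≤ t := hτmem.1.2
  -- on [s₀, τ], x ≥ c
  have hge : ∀ s ∈ Icc s₀ τ, c ≤ x s := by
    intro s hs
    by_contra hxs
    push_neg at hxs
    have hivt2 : c ∈ x '' Icc s₀ s :=
      intermediate_value_Icc' hs.1 (hcx.mono (Icc_subset_Icc le_rfl (hs.2.trans hτt)))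
        ⟨hxs.le, hclt.le⟩
    obtain ⟨σ, hσ, hσeq⟩ := hivt2
    have hσT : σ ∈ T := ⟨⟨hσ.1, (hσ.2.trans hs.2).trans hτt⟩, by simpa using hσeq⟩
    have hτσ : τ ≤ σ := csInf_le hTbdd hσT
    have hσs : σ = s := le_antisymm hσ.2 (hs.2.trans hτσ)
    rw [hσs] at hσeq
    exact hxs.ne hσeq
  have hf_nonneg : ∀ s ∈ Icc s₀ τ, 0 ≤ f s := by
    intro s hs
    have hsαβ : s ∈ Icc α β := ⟨hs₀.1.trans hs.1, (hs.2.trans hτt).trans ht.2⟩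
    have hxge : c ≤ x s := hge s hs
    have hx0s : (0 : ℝ) ≤ x s := (le_max_right _ _).trans hxge
    have hKs : 0 ≤ K s (x s) := hK s hsαβ _ hx0s
    have hxle : x s ≤ θ := hupper s₀ hs₀ hxs₀.2 s hsαβ hs.1
    have h1 : 0 ≤ 1 - x s / θ := by
      rw [sub_nonneg, div_le_one hθ]
      exact hxle
    exact mul_nonneg hKs h1
  have hint_ge : 0 ≤ ∫ s in s₀..τ, f s :=
    intervalIntegral.integral_nonneg hs₀τ hf_nonneg
  have := hstep s₀ hs₀ τ (hsub hτmem.1)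
  rw [hτx] at this
  linarith
end

section
/- Let K be a compact metric space, I = [0,T] a compact interval, N ≥ 1, and ρ ∈ C(K,ℝ) with c_P ≤ ρ(x) ≤ C_P for all x ∈ K, where 0 < c_P < C_P < 1. Let a: I → C(K,ℝ)^N be strongly measurable with a_j(t)(x) ≥ 0 for a.e. t ∈ I, all x ∈ K and j = 1,…,N, and let b: I → C(K,ℝ) be continuous with 0 ≤ b(t)(x) ≤ 1. Let H: ℝ^{N+2} → ℝ be locally Lipschitz with H(a₁,…,a_N, b, c) ≥ 0 whenever all arguments a₁,…,a_N, b, c are nonnegative. Assume there exists p ∈ [1,∞] such that for every bounded set B ⊂ C(K,ℝ) there are m_B ∈ L^p(I) and L_B ∈ L¹(I) with sup_{x∈K} |H(a(t)(x), b(t)(x), c̃(x))| ≤ m_B(t) and sup_{x∈K} |H(a(t)(x), b(t)(x), c̃(x)) − H(a(t)(x), b(t)(x), ĉ(x))| ≤ L_B(t)·‖c̃ − ĉ‖_{C(K)} for a.e. t ∈ I and all c̃, ĉ ∈ B. Then there exists a unique continuous function c: I → C(K,ℝ) such that the integrand t ↦ ( x ↦ H(a(t)(x), b(t)(x), c(t)(x))·(1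 − c(t)(x)/(1 − ρ(x))) ) belongs to L^p(I, C(K,ℝ)) and c(t) = ∫₀ᵗ H(a(s), b(s), c(s))·(1 − c(s)/(1 − ρ)) ds (Bochner integral in C(K,ℝ)) for all t ∈ I, i.e. c solves d_t c = H(a, b, c)(1 − c/(1 − ρ)) with c(0) = 0; moreover this solution satisfies 0 ≤ c(t)(x) ≤ 1 − ρ(x) for all t ∈ I and x ∈ K. -/
open MeasureTheory Set intervalIntegral Filter Topology
open scoped ENNReal


lemma gronwall_exp_aux {T : ℝ} {Λ lam : ℝ → ℝ}
    (hΛ0 : ∀ s, 0 ≤ Λ s) (hΛ : IntegrableOn Λ (Icc 0 T))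
    (hlamdef : ∀ s, lam s = ∫ u in (0:ℝ)..s, Λ u) {t : ℝ} (ht : t ∈ Icc 0 T) :
    ∫ s in (0:ℝ)..t, Λ s * Real.exp (2 * lam s) ≤ Real.exp (2 * lam t) / 2 := by
  obtain ⟨ht0, htT⟩ := ht
  have hT : (0:ℝ) ≤ T := le_trans ht0 htT
  have h0T : (0:ℝ) ∈ Icc 0 T := ⟨le_refl _, hT⟩
  have htI : t ∈ Icc (0:ℝ) T := ⟨ht0, htT⟩
  have hII : ∀ {u v : ℝ}, u ∈ Icc 0 T → v ∈ Icc 0 T → IntervalIntegrable Λ volume u v := by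
    intro u v hu hv
    have h1 : IntervalIntegrable Λ volume 0 T := by
      apply MeasureTheory.IntegrableOn.intervalIntegrable
      rwa [uIcc_of_le hT]
    exact h1.mono_set (by rw [uIcc_of_le hT]; exact uIcc_subset_Icc hu hv)
  have hadd : ∀ {u v : ℝ}, u ∈ Icc 0 T → v ∈ Icc 0 T →
      lam u + ∫ s in u..v, Λ s = lam v := by
    intro u v hu hv
    rw [hlamdef, hlamdef]
    exact integral_add_adjacent_intervals (hII h0T hu) (hII hu hv)
  have hmono : ∀ {u v : ℝ}, u ∈ Icc 0 T → v ∈ Icc 0 T → u ≤ v → lam u ≤ lam v := by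
    intro u v hu hv huv
    have h := hadd hu hv
    nlinarith [integral_nonneg (μ := volume) huv (fun s _ => hΛ0 s)]
  have hlam0 : lam 0 = 0 := by rw [hlamdef]; exact integral_same
  have hcont : ContinuousOn lam (Icc 0 T) := by
    have h2 := continuousOn_primitive_interval (f := Λ) (μ := volume) (a := (0:ℝ)) (b := T)
      (by rwa [uIcc_of_le hT])
    rw [uIcc_of_le hT] at h2
    exact (continuousOn_congr (fun s _ => hlamdef s)).2 h2
  set R := lam t with hRdef
  have hRnn : 0 ≤ R := by
    have := hmono h0T htI ht0; rw [hlam0] at this; exact this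
  have hlamnn : ∀ {s : ℝ}, s ∈ Icc 0 T → 0 ≤ lam s := by
    intro s hs; have := hmono h0T hs hs.1; rwa [hlam0] at this
  -- integrability of the integrand
  set g : ℝ → ℝ := fun s => Λ s * Real.exp (2 * lam s) with hgdef
  have hg_aesm : AEStronglyMeasurable g (volume.restrict (Icc 0 T)) := by
    exact hΛ.aestronglyMeasurable.mul
      ((Real.continuous_exp.comp_continuousOn (continuousOn_const.mul hcont)).aestronglyMeasurable
        measurableSet_Icc)
  have hg_int : IntegrableOn g (Icc 0 T) := by
    refine Integrable.mono' ((hΛ.abs).mul_const (Real.exp (2 * lam T))) hg_aesm ?_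
    filter_upwards [ae_restrict_mem measurableSet_Icc] with s hs
    have h1 : lam s ≤ lam T := hmono hs ⟨hT, le_refl T⟩ hs.2
    have h2 : Real.exp (2 * lam s) ≤ Real.exp (2 * lam T) := Real.exp_le_exp.2 (by linarith)
    calc ‖Λ s * Real.exp (2 * lam s)‖ = Λ s * Real.exp (2 * lam s) := by
          rw [Real.norm_eq_abs, abs_of_nonneg (mul_nonneg (hΛ0 s) (Real.exp_nonneg _))]
      _ ≤ |Λ s| * Real.exp (2 * lam T) := by
          apply mul_le_mul (le_abs_self _) h2 (by positivity) (abs_nonneg _)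
  have hgII : ∀ {u v : ℝ}, u ∈ Icc 0 T → v ∈ Icc 0 T → IntervalIntegrable g volume u v := by
    intro u v hu hv
    have h1 : IntervalIntegrable g volume 0 T := by
      apply MeasureTheory.IntegrableOn.intervalIntegrable
      rwa [uIcc_of_le hT]
    exact h1.mono_set (by rw [uIcc_of_le hT]; exact uIcc_subset_Icc hu hv)
  rcases eq_or_lt_of_le hRnn with hR0 | hRpos
  · -- R = 0 : lam vanishes on [0,t]
    have hz : ∀ s ∈ Icc (0:ℝ) t, lam s = 0 := by
      intro s hs
      have hsI : s ∈ Icc (0:ℝ) T := ⟨hs.1, le_trans hs.2 htT⟩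
      have h1 := hmono hsI htI hs.2
      have h2 := hlamnn hsI
      rw [← hRdef] at h1; linarith [hR0.symm ▸ h1]
    have : (∫ s in (0:ℝ)..t, g s) = ∫ s in (0:ℝ)..t, Λ s := by
      apply integral_congr
      intro s hs
      rw [uIcc_of_le ht0] at hs
      simp [hgdef, hz s hs]
    rw [this, ← hlamdef t, ← hRdef, ← hR0]
    positivity
  · -- main case 0 < R
    have key : ∀ M : ℕ, 1 ≤ M →
        (∫ s in (0:ℝ)..t, g s) ≤ Real.exp (2*R/M) * (Real.exp (2*R) - 1) / 2 := by
      intro M hM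
      have hMpos : (0:ℝ) < M := by exact_mod_cast hM
      set τ : ℕ → ℝ := fun i => min ((i:ℝ)/M) 1 * R with hτdef
      have hτval : ∀ i : ℕ, i ≤ M → τ i = i * R / M := by
        intro i hi
        have h1 : (i:ℝ)/M ≤ 1 := by
          rw [div_le_one hMpos]; exact_mod_cast hi
        simp only [hτdef, min_eq_left h1]; ring
      have hτmono : Monotone τ := by
        intro i j hij
        apply mul_le_mul_of_nonneg_right _ hRnn
        apply min_le_min _ le_rfl
        have hij' : (i:ℝ) ≤ (j:ℝ) := by exact_mod_cast hij
        exact (div_le_div_iff_of_pos_right hMpos).2 hij'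
      have hτnn : ∀ i, 0 ≤ τ i := by
        intro i; apply mul_nonneg (le_min (by positivity) zero_le_one) hRnn
      have hτleR : ∀ i, τ i ≤ R := by
        intro i
        calc τ i ≤ 1 * R := mul_le_mul_of_nonneg_right (min_le_right _ _) hRnn
          _ = R := one_mul R
      have hτ0 : τ 0 = 0 := by simp [hτdef]
      have hτM : τ M = R := by
        simp [hτdef, div_self (ne_of_gt hMpos)]
      set S : ℕ → Set ℝ := fun i => {s | s ∈ Icc 0 t ∧ τ i ≤ lam s} with hSdef
      set u : ℕ → ℝ := fun i => sInf (S i) with hudef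
      have hSne : ∀ i, (S i).Nonempty := by
        intro i; exact ⟨t, ⟨ht0, le_refl t⟩, by rw [← hRdef]; exact hτleR i⟩
      have hSbdd : ∀ i, BddBelow (S i) := fun i => ⟨0, fun s hs => hs.1.1⟩
      have hSsub : ∀ i, S i ⊆ Icc 0 t := fun i s hs => hs.1
      have hu_mem : ∀ i, u i ∈ Icc 0 t := by
        intro i
        constructor
        · exact le_csInf (hSne i) (fun s hs => hs.1.1)
        · exact csInf_le (hSbdd i) ⟨⟨ht0, le_refl t⟩, by rw [← hRdef]; exact hτleR i⟩
      have hu_memT : ∀ i, u i ∈ Icc 0 T := fun i =>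
        ⟨(hu_mem i).1, le_trans (hu_mem i).2 htT⟩
      have hu_cl : ∀ i, u i ∈ closure (S i) := fun i => csInf_mem_closure (hSne i) (hSbdd i)
      have hlam_u_ge : ∀ i, τ i ≤ lam (u i) := by
        intro i
        have hcw : ContinuousWithinAt lam (S i) (u i) := by
          apply (hcont.continuousWithinAt (hu_memT i)).mono
          intro s hs
          exact ⟨(hSsub i hs).1, le_trans (hSsub i hs).2 htT⟩
        haveI hne : (𝓝[S i] (u i)).NeBot := mem_closure_iff_nhdsWithin_neBot.mp (hu_cl i)
        exact ge_of_tendsto hcw.tendsto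
          (eventually_nhdsWithin_of_forall (fun s hs => hs.2))
      have hlam_u : ∀ i, lam (u i) = τ i := by
        intro i
        have hmem : τ i ∈ Icc (lam 0) (lam (u i)) := by
          rw [hlam0]; exact ⟨hτnn i, hlam_u_ge i⟩
        obtain ⟨s, hs, hseq⟩ := intermediate_value_Icc (hu_mem i).1
          (hcont.mono (Icc_subset_Icc le_rfl (hu_memT i).2)) hmem
        have hsS : s ∈ S i := ⟨⟨hs.1, le_trans hs.2 (hu_mem i).2⟩, le_of_eq hseq.symm⟩
        have h1 : u i ≤ s := csInf_le (hSbdd i) hsS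
        have h2 : s = u i := le_antisymm hs.2 h1
        rw [← h2]; exact hseq
      have humono : Monotone u := by
        intro i j hij
        exact csInf_le_csInf (hSbdd i) (hSne j)
          (fun s hs => ⟨hs.1, le_trans (hτmono hij) hs.2⟩)
      -- decomposition
      have hsplit : (∫ s in (0:ℝ)..t, g s) =
          (∫ s in (0:ℝ)..(u 0), g s) + (∑ i ∈ Finset.range M, ∫ s in (u i)..(u (i+1)), g s)
            + (∫ s in (u M)..t, g s) := by
        rw [sum_integral_adjacent_intervals (fun k _ => hgII (hu_memT k) (hu_memT (k+1)))]
        rw [integral_add_adjacent_intervals (hgII h0T (hu_memT 0)) (hgII (hu_memT 0) (hu_memT M))]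
        rw [integral_add_adjacent_intervals (hgII h0T (hu_memT M)) (hgII (hu_memT M) htI)]
      -- edge pieces vanish
      have hedge1 : (∫ s in (0:ℝ)..(u 0), g s) = 0 := by
        have hz : ∀ s ∈ Icc (0:ℝ) (u 0), lam s = 0 := by
          intro s hs
          have hsT : s ∈ Icc (0:ℝ) T := ⟨hs.1, le_trans hs.2 (hu_memT 0).2⟩
          have h1 := hmono hsT (hu_memT 0) hs.2
          rw [hlam_u 0, hτ0] at h1
          linarith [hlamnn hsT]
        have hc : (∫ s in (0:ℝ)..(u 0), g s) = ∫ s in (0:ℝ)..(u 0), Λ s := by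
          apply integral_congr
          intro s hs
          rw [uIcc_of_le (hu_mem 0).1] at hs
          simp [hgdef, hz s hs]
        rw [hc]
        have h3 := hadd h0T (hu_memT 0)
        rw [hlam0, hlam_u 0, hτ0] at h3
        linarith
      have hedge3 : (∫ s in (u M)..t, g s) = 0 := by
        have hzR : ∀ s ∈ Icc (u M) t, lam s = R := by
          intro s hs
          have hsT : s ∈ Icc (0:ℝ) T := ⟨le_trans (hu_mem M).1 hs.1, le_trans hs.2 htT⟩
          have h1 := hmono (hu_memT M) hsT hs.1
          have h2 := hmono hsT htI hs.2
          rw [hlam_u M, hτM] at h1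
          rw [← hRdef] at h2
          linarith
        have hc : (∫ s in (u M)..t, g s) = ∫ s in (u M)..t, Λ s * Real.exp (2*R) := by
          apply integral_congr
          intro s hs
          rw [uIcc_of_le (hu_mem M).2] at hs
          simp [hgdef, hzR s hs]
        rw [hc, intervalIntegral.integral_mul_const]
        have h3 := hadd (hu_memT M) htI
        rw [hlam_u M, hτM, ← hRdef] at h3
        have : (∫ s in (u M)..t, Λ s) = 0 := by linarith
        rw [this, zero_mul]
      -- middle blocks
      have hmid : ∀ i, i < M → (∫ s in (u i)..(u (i+1)), g s)
          ≤ (R/M) * Real.exp (2 * τ (i+1)) := by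
        intro i hi
        have hle : u i ≤ u (i+1) := humono (Nat.le_succ i)
        have hb : ∀ s ∈ Icc (u i) (u (i+1)), g s ≤ Λ s * Real.exp (2 * τ (i+1)) := by
          intro s hs
          have hsT : s ∈ Icc (0:ℝ) T := ⟨le_trans (hu_mem i).1 hs.1,
            le_trans (le_trans hs.2 (hu_mem (i+1)).2) htT⟩
          have h1 : lam s ≤ τ (i+1) := by
            rw [← hlam_u (i+1)]; exact hmono hsT (hu_memT (i+1)) hs.2
          exact mul_le_mul_of_nonneg_left (Real.exp_le_exp.2 (by linarith)) (hΛ0 s)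
        calc (∫ s in (u i)..(u (i+1)), g s)
            ≤ ∫ s in (u i)..(u (i+1)), Λ s * Real.exp (2 * τ (i+1)) :=
              integral_mono_on hle (hgII (hu_memT i) (hu_memT (i+1)))
                ((hII (hu_memT i) (hu_memT (i+1))).mul_const _) hb
          _ = (∫ s in (u i)..(u (i+1)), Λ s) * Real.exp (2 * τ (i+1)) := integral_mul_const _ _
          _ = (τ (i+1) - τ i) * Real.exp (2 * τ (i+1)) := by
              have h3 := hadd (hu_memT i) (hu_memT (i+1))
              rw [hlam_u i, hlam_u (i+1)] at h3
              congr 1; linarith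
          _ = (R/M) * Real.exp (2 * τ (i+1)) := by
              rw [hτval i (le_of_lt hi), hτval (i+1) hi]
              congr 1
              push_cast
              field_simp
              ring
      -- sum the geometric series
      set q : ℝ := Real.exp (2*R/M) with hqdef
      have hq1 : 1 < q := by
        have := Real.add_one_le_exp (2*R/M)
        have hpos : 0 < 2*R/M := by positivity
        rw [hqdef]; linarith
      have hqM : q ^ M = Real.exp (2*R) := by
        rw [hqdef, ← Real.exp_nat_mul]
        congr 1
        field_simp
      have hsum : (∑ i ∈ Finset.range M, (R/M) * Real.exp (2 * τ (i+1)))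
          ≤ q * (Real.exp (2*R) - 1) / 2 := by
        have hterm : ∀ i ∈ Finset.range M,
            (R/M) * Real.exp (2 * τ (i+1)) = (R/M) * q ^ (i+1) := by
          intro i hi
          rw [Finset.mem_range] at hi
          rw [hτval (i+1) hi]
          congr 1
          rw [hqdef, ← Real.exp_nat_mul]
          congr 1
          push_cast
          field_simp
        rw [Finset.sum_congr rfl hterm]
        have hgeom : (∑ i ∈ Finset.range M, (R/M) * q ^ (i+1))
            = (R/M) * (q * ((q^M - 1)/(q - 1))) := by
          rw [← Finset.mul_sum]
          congr 1
          rw [← geom_sum_eq (ne_of_gt hq1) M, Finset.mul_sum]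
          apply Finset.sum_congr rfl
          intro i _
          ring
        rw [hgeom]
        have hE1 : 0 ≤ Real.exp (2*R) - 1 := by linarith [Real.add_one_le_exp (2*R)]
        have hq01 : (0:ℝ) < q - 1 := by linarith
        have h2Rq : 2*R/M ≤ q - 1 := by
          have := Real.add_one_le_exp (2*R/M)
          rw [hqdef]; linarith
        have hD0 : 0 ≤ (q^M - 1)/(q-1) := by
          rw [hqM]; exact div_nonneg hE1 hq01.le
        have hq0 : (0:ℝ) ≤ q := by linarith
        have hRM : R/M ≤ (q-1)/2 := by
          have h3 : 2*(R/↑M) = 2*R/↑M := by ring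
          linarith
        have hcancel : (q^M - 1)/(q-1) * (q-1) = Real.exp (2*R) - 1 := by
          rw [div_mul_cancel₀ _ (ne_of_gt hq01), hqM]
        nlinarith [mul_le_mul_of_nonneg_left hRM (mul_nonneg hq0 hD0), hcancel,
          mul_nonneg hq0 hD0]
      calc (∫ s in (0:ℝ)..t, g s)
          = ∑ i ∈ Finset.range M, ∫ s in (u i)..(u (i+1)), g s := by
            rw [hsplit, hedge1, hedge3]; ring
        _ ≤ ∑ i ∈ Finset.range M, (R/M) * Real.exp (2 * τ (i+1)) :=
            Finset.sum_le_sum (fun i hi => hmid i (Finset.mem_range.mp hi))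
        _ ≤ Real.exp (2*R/M) * (Real.exp (2*R) - 1) / 2 := hsum
    have hlim : Tendsto (fun M : ℕ => Real.exp (2*R/M) * (Real.exp (2*R) - 1) / 2) atTop
        (𝓝 (Real.exp 0 * (Real.exp (2*R) - 1) / 2)) := by
      apply Tendsto.div_const
      apply Tendsto.mul_const
      exact (Real.continuous_exp.tendsto 0).comp (tendsto_const_div_atTop_nhds_zero_nat (2*R))
    have hle : (∫ s in (0:ℝ)..t, g s) ≤ Real.exp 0 * (Real.exp (2*R) - 1) / 2 :=
      ge_of_tendsto hlim (eventually_atTop.2 ⟨1, fun M hM => key M hM⟩)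
    rw [Real.exp_zero, one_mul] at hle
    have hexp : 0 < Real.exp (2*R) := Real.exp_pos _
    calc (∫ s in (0:ℝ)..t, g s) ≤ (Real.exp (2*R) - 1)/2 := hle
      _ ≤ Real.exp (2 * R) / 2 := by linarith

lemma norm_intervalIntegral_le_of_ae {E : Type*} [NormedAddCommGroup E] [NormedSpace ℝ E]
    {f : ℝ → E} {g : ℝ → ℝ} {T t : ℝ} (ht : t ∈ Icc 0 T)
    (hf : IntervalIntegrable f volume 0 t)
    (hg : IntervalIntegrable g volume 0 t)
    (hle : ∀ᵐ s ∂(volume.restrict (Icc (0:ℝ) T)), ‖f s‖ ≤ g s) :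
    ‖∫ s in (0:ℝ)..t, f s‖ ≤ ∫ s in (0:ℝ)..t, g s := by
  have h1 : ‖∫ s in (0:ℝ)..t, f s‖ ≤ |∫ s in (0:ℝ)..t, ‖f s‖| :=
    intervalIntegral.norm_integral_le_abs_integral_norm
  have h2 : (∫ s in (0:ℝ)..t, ‖f s‖) ≤ ∫ s in (0:ℝ)..t, g s := by
    apply integral_mono_ae_restrict ht.1 hf.norm hg
    exact ae_restrict_of_ae_restrict_of_subset (Icc_subset_Icc le_rfl ht.2) hle
  have h3 : (0:ℝ) ≤ ∫ s in (0:ℝ)..t, ‖f s‖ :=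
    intervalIntegral.integral_nonneg ht.1 (fun s _ => norm_nonneg _)
  calc ‖∫ s in (0:ℝ)..t, f s‖ ≤ |∫ s in (0:ℝ)..t, ‖f s‖| := h1
    _ = ∫ s in (0:ℝ)..t, ‖f s‖ := abs_of_nonneg h3
    _ ≤ _ := h2

lemma primitive_le_of_vanish {T r : ℝ} {f u : ℝ → ℝ}
    (hr : 0 < r) (hu : ContinuousOn u (Icc 0 T))
    (hf : IntervalIntegrable f volume 0 T)
    (hrepr : ∀ t ∈ Icc (0:ℝ) T, u t = ∫ s in (0:ℝ)..t, f s)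
    (hvan : ∀ s ∈ Icc (0:ℝ) T, r < u s → f s = 0) :
    ∀ t ∈ Icc (0:ℝ) T, u t ≤ r := by
  intro t0 ht0
  by_contra hgt
  push_neg at hgt
  have hT0 : (0:ℝ) ≤ T := le_trans ht0.1 ht0.2
  have h0I : (0:ℝ) ∈ Icc (0:ℝ) T := ⟨le_rfl, hT0⟩
  have hu0 : u 0 = 0 := by rw [hrepr 0 h0I, intervalIntegral.integral_same]
  set A := {s | s ∈ Icc (0:ℝ) t0 ∧ u s ≤ r} with hA
  have hAne : A.Nonempty := ⟨0, ⟨le_rfl, ht0.1⟩, by rw [hu0]; exact hr.le⟩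
  have hAbdd : BddAbove A := ⟨t0, fun s hs => hs.1.2⟩
  set τ := sSup A with hτdef
  have hτmem : τ ∈ Icc 0 t0 :=
    ⟨le_csSup hAbdd ⟨⟨le_rfl, ht0.1⟩, by rw [hu0]; exact hr.le⟩,
      csSup_le hAne (fun s hs => hs.1.2)⟩
  have hτT : τ ∈ Icc (0:ℝ) T := ⟨hτmem.1, le_trans hτmem.2 ht0.2⟩
  have hτcl : τ ∈ closure A := csSup_mem_closure hAne hAbdd
  have hsubA : A ⊆ Icc (0:ℝ) T := fun s hs => ⟨hs.1.1, le_trans hs.1.2 ht0.2⟩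
  have huτ : u τ ≤ r := by
    have hcw : ContinuousWithinAt u A τ := (hu.continuousWithinAt hτT).mono hsubA
    haveI : (𝓝[A] τ).NeBot := mem_closure_iff_nhdsWithin_neBot.mp hτcl
    exact le_of_tendsto hcw.tendsto (eventually_nhdsWithin_of_forall (fun s hs => hs.2))
  have hτlt : τ < t0 := lt_of_le_of_ne hτmem.2 (fun h => by rw [h] at huτ; linarith)
  have hfz : ∀ s ∈ Ioc τ t0, f s = (fun _ => (0:ℝ)) s := by
    intro s hs
    have hsI : s ∈ Icc (0:ℝ) T := ⟨le_trans hτmem.1 hs.1.le, le_trans hs.2 ht0.2⟩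
    apply hvan s hsI
    by_contra hle
    push_neg at hle
    have hsA : s ∈ A := ⟨⟨le_trans hτmem.1 hs.1.le, hs.2⟩, hle⟩
    exact absurd (le_csSup hAbdd hsA) (not_le.2 hs.1)
  have hint : ∀ {a b : ℝ}, a ∈ Icc (0:ℝ) T → b ∈ Icc (0:ℝ) T →
      IntervalIntegrable f volume a b := by
    intro a b ha hb
    exact hf.mono_set (by rw [uIcc_of_le hT0]; exact uIcc_subset_Icc ha hb)
  have hdiff : u t0 - u τ = ∫ s in τ..t0, f s := by
    rw [hrepr t0 ht0, hrepr τ hτT]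
    have := intervalIntegral.integral_add_adjacent_intervals (hint h0I hτT) (hint hτT ht0)
    linarith
  have hzero : (∫ s in τ..t0, f s) = 0 := by
    rw [intervalIntegral.integral_of_le hτlt.le,
      MeasureTheory.setIntegral_congr_fun measurableSet_Ioc hfz]
    simp
  rw [hzero] at hdiff
  linarith

lemma gronwall_zero {T : ℝ} {Λ u : ℝ → ℝ}
    (hΛ0 : ∀ s, 0 ≤ Λ s) (hΛ : IntegrableOn Λ (Icc 0 T))
    (hu : ContinuousOn u (Icc 0 T)) (hu0 : ∀ t ∈ Icc (0:ℝ) T, 0 ≤ u t)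
    (hint : IntegrableOn (fun s => Λ s * u s) (Icc 0 T))
    (hle : ∀ t ∈ Icc (0:ℝ) T, u t ≤ ∫ s in (0:ℝ)..t, Λ s * u s) :
    ∀ t ∈ Icc (0:ℝ) T, u t = 0 := by
  intro t ht
  have hT0 : (0:ℝ) ≤ T := le_trans ht.1 ht.2
  have h0I : (0:ℝ) ∈ Icc (0:ℝ) T := ⟨le_rfl, hT0⟩
  have hu00 : u 0 = 0 := by
    have h1 := hle 0 h0I
    rw [intervalIntegral.integral_same] at h1
    exact le_antisymm h1 (hu0 0 h0I)
  set A := {s | s ∈ Icc (0:ℝ) T ∧ ∀ σ ∈ Icc (0:ℝ) s, u σ = 0} with hA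
  have h0A : (0:ℝ) ∈ A := by
    refine ⟨h0I, fun σ hσ => ?_⟩
    have : σ = 0 := le_antisymm hσ.2 hσ.1
    rw [this, hu00]
  have hAne : A.Nonempty := ⟨0, h0A⟩
  have hAbdd : BddAbove A := ⟨T, fun s hs => hs.1.2⟩
  set τ := sSup A with hτdef
  have hτI : τ ∈ Icc (0:ℝ) T := ⟨le_csSup hAbdd h0A, csSup_le hAne (fun s hs => hs.1.2)⟩
  have hlt_zero : ∀ s, 0 ≤ s → s < τ → u s = 0 := by
    intro s hs0 hsτ
    obtain ⟨t', ht'A, hst'⟩ := exists_lt_of_lt_csSup hAne hsτ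
    exact ht'A.2 s ⟨hs0, hst'.le⟩
  have huτ : u τ = 0 := by
    rcases eq_or_lt_of_le hτI.1 with h0τ | h0τ
    · rw [← h0τ, hu00]
    · have hcw : ContinuousWithinAt u (Ico 0 τ) τ :=
        (hu.continuousWithinAt hτI).mono (fun s hs => ⟨hs.1, le_trans hs.2.le hτI.2⟩)
      haveI : (𝓝[Ico (0:ℝ) τ] τ).NeBot := by
        apply mem_closure_iff_nhdsWithin_neBot.mp
        rw [closure_Ico (ne_of_lt h0τ)]
        exact ⟨h0τ.le, le_rfl⟩
      have h1 : Filter.Tendsto u (𝓝[Ico (0:ℝ) τ] τ) (𝓝 (u τ)) := hcw.tendsto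
      have h2 : Filter.Tendsto u (𝓝[Ico (0:ℝ) τ] τ) (𝓝 0) := by
        apply Filter.Tendsto.congr' _ tendsto_const_nhds
        filter_upwards [eventually_mem_nhdsWithin] with s hs
        exact (hlt_zero s hs.1 hs.2).symm
      exact tendsto_nhds_unique h1 h2
  have hτA : τ ∈ A := by
    refine ⟨hτI, fun σ hσ => ?_⟩
    rcases eq_or_lt_of_le hσ.2 with h | h
    · rw [h, huτ]
    · exact hlt_zero σ hσ.1 h
  have hτT : τ = T := by
    by_contra hne
    have hlt : τ < T := lt_of_le_of_ne hτI.2 hne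
    -- find r > τ with small mass of Λ
    set lam : ℝ → ℝ := fun x => ∫ s in (0:ℝ)..x, Λ s with hlamdef
    have hΛII : ∀ {a b : ℝ}, a ∈ Icc (0:ℝ) T → b ∈ Icc (0:ℝ) T →
        IntervalIntegrable Λ volume a b := by
      intro a b ha hb
      have h1 : IntervalIntegrable Λ volume 0 T := by
        apply MeasureTheory.IntegrableOn.intervalIntegrable
        rwa [uIcc_of_le hT0]
      exact h1.mono_set (by rw [uIcc_of_le hT0]; exact uIcc_subset_Icc ha hb)
    have hcontlam : ContinuousOn lam (Icc 0 T) := by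
      have h2 := continuousOn_primitive_interval (f := Λ) (μ := volume) (a := (0:ℝ)) (b := T)
        (by rwa [uIcc_of_le hT0])
      rwa [uIcc_of_le hT0] at h2
    have hlamadd : ∀ {a b : ℝ}, a ∈ Icc (0:ℝ) T → b ∈ Icc (0:ℝ) T →
        lam a + ∫ s in a..b, Λ s = lam b := by
      intro a b ha hb
      exact intervalIntegral.integral_add_adjacent_intervals (hΛII h0I ha) (hΛII ha hb)
    have hcw : ContinuousWithinAt lam (Ioc τ T) τ :=
      (hcontlam.continuousWithinAt hτI).mono (fun s hs => ⟨le_trans hτI.1 hs.1.le, hs.2⟩)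
    haveI : (𝓝[Ioc τ T] τ).NeBot := by
      apply mem_closure_iff_nhdsWithin_neBot.mp
      rw [closure_Ioc (ne_of_lt hlt)]
      exact ⟨le_rfl, hlt.le⟩
    have hev : ∀ᶠ s in 𝓝[Ioc τ T] τ, |lam s - lam τ| < 1/2 := by
      have h3 := hcw.tendsto (Metric.ball_mem_nhds (lam τ) (by norm_num : (0:ℝ) < 1/2))
      filter_upwards [h3] with s hs
      simpa [Metric.mem_ball, Real.dist_eq] using hs
    obtain ⟨r, hrmem, hrsmall⟩ := (eventually_mem_nhdsWithin.and hev).exists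
    -- max of u on [τ, r]
    have hrI : r ∈ Icc (0:ℝ) T := ⟨le_trans hτI.1 hrmem.1.le, hrmem.2⟩
    have hsub : Icc τ r ⊆ Icc (0:ℝ) T := fun s hs => ⟨le_trans hτI.1 hs.1, le_trans hs.2 hrI.2⟩
    obtain ⟨tm, htm, hmax⟩ := isCompact_Icc.exists_isMaxOn (α := ℝ) (β := ℝ)
      ⟨τ, le_rfl, hrmem.1.le⟩ (hu.mono hsub)
    have htmI : tm ∈ Icc (0:ℝ) T := hsub htm
    set M := u tm with hM
    have hM0 : 0 ≤ M := hu0 tm htmI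
    have hfII : ∀ {a b : ℝ}, a ∈ Icc (0:ℝ) T → b ∈ Icc (0:ℝ) T →
        IntervalIntegrable (fun s => Λ s * u s) volume a b := by
      intro a b ha hb
      have h1 : IntervalIntegrable (fun s => Λ s * u s) volume 0 T := by
        apply MeasureTheory.IntegrableOn.intervalIntegrable
        rwa [uIcc_of_le hT0]
      exact h1.mono_set (by rw [uIcc_of_le hT0]; exact uIcc_subset_Icc ha hb)
    have h1 : u tm ≤ ∫ s in (0:ℝ)..tm, Λ s * u s := hle tm htmI
    have hsplit : (∫ s in (0:ℝ)..tm, Λ s * u s)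
        = (∫ s in (0:ℝ)..τ, Λ s * u s) + ∫ s in τ..tm, Λ s * u s :=
      (intervalIntegral.integral_add_adjacent_intervals (hfII h0I hτI) (hfII hτI htmI)).symm
    have hz1 : (∫ s in (0:ℝ)..τ, Λ s * u s) = 0 := by
      have : ∀ s ∈ uIcc (0:ℝ) τ, Λ s * u s = (fun _ => (0:ℝ)) s := by
        intro s hs
        rw [uIcc_of_le hτI.1] at hs
        rw [hτA.2 s hs, mul_zero]
      rw [intervalIntegral.integral_congr this, intervalIntegral.integral_zero]
    have h2 : (∫ s in τ..tm, Λ s * u s) ≤ ∫ s in τ..tm, Λ s * M := by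
      apply intervalIntegral.integral_mono_on htm.1 (hfII hτI htmI)
        ((hΛII hτI htmI).mul_const _)
      intro s hs
      have hsr : s ∈ Icc τ r := ⟨hs.1, le_trans hs.2 htm.2⟩
      exact mul_le_mul_of_nonneg_left (hmax hsr) (hΛ0 s)
    have h3 : (∫ s in τ..tm, Λ s * M) = (lam tm - lam τ) * M := by
      rw [intervalIntegral.integral_mul_const]
      have := hlamadd hτI htmI
      congr 1
      linarith
    have h4 : lam tm - lam τ ≤ 1/2 := by
      have hmono1 : lam tm ≤ lam r := by
        have := hlamadd htmI hrI
        nlinarith [intervalIntegral.integral_nonneg (μ := volume) htm.2 (fun s _ => hΛ0 s)]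
      have := abs_lt.mp hrsmall
      linarith
    have h5 : 0 ≤ lam tm - lam τ := by
      have := hlamadd hτI htmI
      nlinarith [intervalIntegral.integral_nonneg (μ := volume) htm.1 (fun s _ => hΛ0 s)]
    have hMle : M ≤ M * (1/2) := by
      calc M = u tm := rfl
        _ ≤ (∫ s in (0:ℝ)..tm, Λ s * u s) := h1
        _ = (∫ s in (0:ℝ)..τ, Λ s * u s) + ∫ s in τ..tm, Λ s * u s := hsplit
        _ ≤ 0 + (lam tm - lam τ) * M := by rw [hz1]; rw [← h3] at *; linarith [h2]
        _ ≤ M * (1/2) := by nlinarith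
    have hMzero : M = 0 := by linarith
    have hrA : r ∈ A := by
      refine ⟨hrI, fun σ hσ => ?_⟩
      rcases le_or_gt σ τ with h | h
      · exact hτA.2 σ ⟨hσ.1, h⟩
      · have hσm : σ ∈ Icc τ r := ⟨h.le, hσ.2⟩
        have := hmax hσm
        rw [← hM, hMzero] at this
        exact le_antisymm this (hu0 σ ⟨hσ.1, le_trans hσ.2 hrI.2⟩)
    exact absurd (le_csSup hAbdd hrA) (not_le.2 hrmem.1)
  exact hτA.2 t ⟨ht.1, by rw [hτT]; exact ht.2⟩

lemma lam_mul_cont_integrableOn {T : ℝ} {Λ h : ℝ → ℝ}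
    (hΛ : IntegrableOn Λ (Icc 0 T)) (hc : ContinuousOn h (Icc 0 T)) :
    IntegrableOn (fun s => Λ s * h s) (Icc 0 T) := by
  obtain ⟨C, hC⟩ := isCompact_Icc.exists_bound_of_continuousOn hc
  refine Integrable.mono' ((hΛ.abs).mul_const C)
    (hΛ.aestronglyMeasurable.mul (hc.aestronglyMeasurable measurableSet_Icc)) ?_
  filter_upwards [ae_restrict_mem measurableSet_Icc] with s hs
  rw [Real.norm_eq_abs, abs_mul]
  exact mul_le_mul_of_nonneg_left (hC s hs) (abs_nonneg _)

lemma caratheodory_fixed_point {E : Type*} [NormedAddCommGroup E] [NormedSpace ℝ E]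
    [CompleteSpace E] {T : ℝ} (hT : 0 < T)
    (G : ℝ → E → E) {m Λ : ℝ → ℝ}
    (haesm : ∀ c : ℝ → E, Continuous c →
      AEStronglyMeasurable (fun s => G s (c s)) (volume.restrict (Icc 0 T)))
    (hm : IntegrableOn m (Icc 0 T))
    (hbd : ∀ᵐ s ∂(volume.restrict (Icc (0:ℝ) T)), ∀ u : E, ‖G s u‖ ≤ m s)
    (hΛ0 : ∀ s, 0 ≤ Λ s) (hΛ : IntegrableOn Λ (Icc 0 T))
    (hlip : ∀ᵐ s ∂(volume.restrict (Icc (0:ℝ) T)), ∀ u v : E,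
      ‖G s u - G s v‖ ≤ Λ s * ‖u - v‖) :
    ∃ c : ℝ → E, Continuous c ∧ ∀ t ∈ Icc (0:ℝ) T, c t = ∫ s in (0:ℝ)..t, G s (c s) := by
  have hT0 : (0:ℝ) ≤ T := hT.le
  have h0I : (0:ℝ) ∈ Icc (0:ℝ) T := ⟨le_rfl, hT0⟩
  set ext : C(Icc (0:ℝ) T, E) → ℝ → E := fun c s => c (projIcc 0 T hT0 s) with hext
  have hext_cont : ∀ c, Continuous (ext c) := fun c => c.continuous.comp continuous_projIcc
  set Fc : C(Icc (0:ℝ) T, E) → ℝ → E := fun c s => G s (ext c s) with hFc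
  have hFc_aesm : ∀ c, AEStronglyMeasurable (Fc c) (volume.restrict (Icc 0 T)) :=
    fun c => haesm _ (hext_cont c)
  have hFc_int : ∀ c, IntegrableOn (Fc c) (Icc 0 T) := by
    intro c
    refine Integrable.mono' hm.abs (hFc_aesm c) ?_
    filter_upwards [hbd] with s hs using (hs (ext c s)).trans (le_abs_self _)
  have hFc_II : ∀ c {α β : ℝ}, α ∈ Icc (0:ℝ) T → β ∈ Icc (0:ℝ) T →
      IntervalIntegrable (Fc c) volume α β := by
    intro c α β hα hβ
    have h1 : IntervalIntegrable (Fc c) volume 0 T := by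
      apply MeasureTheory.IntegrableOn.intervalIntegrable
      rw [uIcc_of_le hT0]; exact hFc_int c
    exact h1.mono_set (by rw [uIcc_of_le hT0]; exact uIcc_subset_Icc hα hβ)
  have hPcont : ∀ c, ContinuousOn (fun t => ∫ s in (0:ℝ)..t, Fc c s) (Icc 0 T) := by
    intro c
    have h2 := continuousOn_primitive_interval (f := Fc c) (μ := volume) (a := (0:ℝ)) (b := T)
      (by rw [uIcc_of_le hT0]; exact hFc_int c)
    rwa [uIcc_of_le hT0] at h2
  set P : C(Icc (0:ℝ) T, E) → C(Icc (0:ℝ) T, E) := fun c =>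
    ⟨(Icc (0:ℝ) T).restrict (fun t => ∫ s in (0:ℝ)..t, Fc c s), (hPcont c).restrict⟩ with hP
  have hP_apply : ∀ c (t : Icc (0:ℝ) T), P c t = ∫ s in (0:ℝ)..(t:ℝ), Fc c s := fun c t => rfl
  -- the weight
  set lam : ℝ → ℝ := fun σ => ∫ s in (0:ℝ)..σ, Λ s with hlam
  have hlam_cont : ContinuousOn lam (Icc 0 T) := by
    have h2 := continuousOn_primitive_interval (f := Λ) (μ := volume) (a := (0:ℝ)) (b := T)
      (by rwa [uIcc_of_le hT0])
    rwa [uIcc_of_le hT0] at h2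
  set W : C(Icc (0:ℝ) T, E) → C(Icc (0:ℝ) T, E) := fun c =>
    ⟨fun t => Real.exp (2 * lam ↑t) • c t,
      ((Real.continuous_exp.comp (continuous_const.mul hlam_cont.restrict)).smul c.continuous)⟩
    with hW
  set Wneg : C(Icc (0:ℝ) T, E) → C(Icc (0:ℝ) T, E) := fun c =>
    ⟨fun t => Real.exp (-(2 * lam ↑t)) • c t,
      ((Real.continuous_exp.comp (continuous_const.mul hlam_cont.restrict).neg).smul
        c.continuous)⟩ with hWneg
  set Q : C(Icc (0:ℝ) T, E) → C(Icc (0:ℝ) T, E) := fun c => Wneg (P (W c)) with hQ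
  have hQdist : ∀ c d, dist (Q c) (Q d) ≤ (1/2) * dist c d := by
    intro c d
    have hDnn : (0:ℝ) ≤ dist c d := dist_nonneg
    rw [ContinuousMap.dist_le (by positivity)]
    intro t
    have htr : (t : ℝ) ∈ Icc (0:ℝ) T := t.2
    -- continuous difference norm
    have hνc : ContinuousOn (fun s => ‖ext (W c) s - ext (W d) s‖) (Icc 0 T) :=
      (((hext_cont (W c)).sub (hext_cont (W d))).norm).continuousOn
    have hg_int : IntegrableOn (fun s => Λ s * ‖ext (W c) s - ext (W d) s‖) (Icc 0 T) :=
      lam_mul_cont_integrableOn hΛ hνc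
    have hg_II : IntervalIntegrable (fun s => Λ s * ‖ext (W c) s - ext (W d) s‖) volume 0 ↑t := by
      have h1 := MeasureTheory.IntegrableOn.intervalIntegrable
        (by rw [uIcc_of_le hT0]; exact hg_int :
          IntegrableOn (fun s => Λ s * ‖ext (W c) s - ext (W d) s‖) (uIcc 0 T) volume)
      exact h1.mono_set (by rw [uIcc_of_le hT0]; exact uIcc_subset_Icc h0I htr)
    have hh_int : IntegrableOn (fun s => Λ s * (Real.exp (2 * lam s) * dist c d)) (Icc 0 T) :=
      lam_mul_cont_integrableOn hΛ
        (((Real.continuous_exp.comp_continuousOn (continuousOn_const.mul hlam_cont))).mul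
          continuousOn_const)
    have hh_II : IntervalIntegrable (fun s => Λ s * (Real.exp (2 * lam s) * dist c d))
        volume 0 ↑t := by
      have h1 := MeasureTheory.IntegrableOn.intervalIntegrable
        (by rw [uIcc_of_le hT0]; exact hh_int :
          IntegrableOn (fun s => Λ s * (Real.exp (2 * lam s) * dist c d)) (uIcc 0 T) volume)
      exact h1.mono_set (by rw [uIcc_of_le hT0]; exact uIcc_subset_Icc h0I htr)
    have e2 : ‖P (W c) t - P (W d) t‖
        ≤ ∫ s in (0:ℝ)..(t:ℝ), Λ s * ‖ext (W c) s - ext (W d) s‖ := by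
      have hsub : P (W c) t - P (W d) t = ∫ s in (0:ℝ)..(t:ℝ), (Fc (W c) s - Fc (W d) s) := by
        rw [hP_apply, hP_apply,
          intervalIntegral.integral_sub (hFc_II _ h0I htr) (hFc_II _ h0I htr)]
      rw [hsub]
      apply norm_intervalIntegral_le_of_ae htr
        ((hFc_II _ h0I htr).sub (hFc_II _ h0I htr)) hg_II
      filter_upwards [hlip] with s hs using hs (ext (W c) s) (ext (W d) s)
    have e3 : (∫ s in (0:ℝ)..(t:ℝ), Λ s * ‖ext (W c) s - ext (W d) s‖)
        ≤ ∫ s in (0:ℝ)..(t:ℝ), Λ s * (Real.exp (2 * lam s) * dist c d) := by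
      apply integral_mono_ae_restrict htr.1 hg_II hh_II
      filter_upwards [ae_restrict_mem measurableSet_Icc] with s hs
      have hsT : s ∈ Icc (0:ℝ) T := ⟨hs.1, hs.2.trans htr.2⟩
      have hdiff : ext (W c) s - ext (W d) s
          = Real.exp (2 * lam s) • (c ⟨s, hsT⟩ - d ⟨s, hsT⟩) := by
        simp only [hext, hW, projIcc_of_mem hT0 hsT, ContinuousMap.coe_mk, smul_sub]
        rfl
      rw [hdiff, norm_smul, Real.norm_eq_abs, abs_of_pos (Real.exp_pos _)]
      have hd : ‖c ⟨s, hsT⟩ - d ⟨s, hsT⟩‖ ≤ dist c d := by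
        rw [← dist_eq_norm]; exact ContinuousMap.dist_apply_le_dist _
      exact mul_le_mul_of_nonneg_left
        (mul_le_mul_of_nonneg_left hd (Real.exp_nonneg _)) (hΛ0 s)
    have e4 : (∫ s in (0:ℝ)..(t:ℝ), Λ s * (Real.exp (2 * lam s) * dist c d))
        = (∫ s in (0:ℝ)..(t:ℝ), Λ s * Real.exp (2 * lam s)) * dist c d := by
      rw [← intervalIntegral.integral_mul_const]
      apply intervalIntegral.integral_congr
      intro s _
      ring
    have e5 : (∫ s in (0:ℝ)..(t:ℝ), Λ s * Real.exp (2 * lam s))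
        ≤ Real.exp (2 * lam ↑t) / 2 :=
      gronwall_exp_aux hΛ0 hΛ (fun s => rfl) htr
    have e1 : dist (Q c t) (Q d t)
        = Real.exp (-(2 * lam ↑t)) * ‖P (W c) t - P (W d) t‖ := by
      rw [dist_eq_norm]
      have : Q c t - Q d t = Real.exp (-(2 * lam ↑t)) • (P (W c) t - P (W d) t) := by
        simp only [hQ, hWneg, ContinuousMap.coe_mk, smul_sub]
        rfl
      rw [this, norm_smul, Real.norm_eq_abs, abs_of_pos (Real.exp_pos _)]
    rw [e1]
    have hchain : ‖P (W c) t - P (W d) t‖ ≤ (Real.exp (2 * lam ↑t) / 2) * dist c d := by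
      calc ‖P (W c) t - P (W d) t‖
          ≤ ∫ s in (0:ℝ)..(t:ℝ), Λ s * ‖ext (W c) s - ext (W d) s‖ := e2
        _ ≤ ∫ s in (0:ℝ)..(t:ℝ), Λ s * (Real.exp (2 * lam s) * dist c d) := e3
        _ = (∫ s in (0:ℝ)..(t:ℝ), Λ s * Real.exp (2 * lam s)) * dist c d := e4
        _ ≤ (Real.exp (2 * lam ↑t) / 2) * dist c d := mul_le_mul_of_nonneg_right e5 hDnn
    calc Real.exp (-(2 * lam ↑t)) * ‖P (W c) t - P (W d) t‖
        ≤ Real.exp (-(2 * lam ↑t)) * ((Real.exp (2 * lam ↑t) / 2) * dist c d) :=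
          mul_le_mul_of_nonneg_left hchain (Real.exp_nonneg _)
      _ = (Real.exp (-(2 * lam ↑t)) * Real.exp (2 * lam ↑t)) * (dist c d / 2) := by ring
      _ = (1/2) * dist c d := by rw [← Real.exp_add]; simp; ring
  have hcontr : ContractingWith (1/2 : NNReal) Q := by
    constructor
    · exact one_half_lt_one
    · apply LipschitzWith.of_dist_le_mul
      intro c d
      have := hQdist c d
      simpa using this
  haveI : Nonempty C(Icc (0:ℝ) T, E) := ⟨ContinuousMap.const _ 0⟩
  set y := ContractingWith.fixedPoint Q hcontr with hy
  have hyfix : Q y = y := hcontr.fixedPoint_isFixedPt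
  set z := W y with hz
  have hWW : ∀ w, W (Wneg w) = w := by
    intro w
    ext t
    show Real.exp (2 * lam ↑t) • (Real.exp (-(2 * lam ↑t)) • w t) = w t
    simp only [hW, hWneg, ContinuousMap.coe_mk, smul_smul, ← Real.exp_add]
    simp
  have hzfix : P z = z := by
    have h1 : W (Q y) = P (W y) := by rw [hQ]; exact hWW _
    calc P z = P (W y) := rfl
      _ = W (Q y) := h1.symm
      _ = W y := by rw [hyfix]
      _ = z := rfl
  refine ⟨ext z, hext_cont z, ?_⟩
  intro t ht
  have h1 : ext z t = z ⟨t, ht⟩ := by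
    simp only [hext, projIcc_of_mem hT0 ht]
  rw [h1]
  conv_lhs => rw [← hzfix]
  exact hP_apply z ⟨t, ht⟩

lemma integral_eq_unique {E : Type*} [NormedAddCommGroup E] [NormedSpace ℝ E] [CompleteSpace E]
    {T : ℝ} {Λ : ℝ → ℝ} (hΛ0 : ∀ s, 0 ≤ Λ s) (hΛ : IntegrableOn Λ (Icc 0 T))
    {c c' F F' : ℝ → E}
    (hc : ContinuousOn c (Icc 0 T)) (hc' : ContinuousOn c' (Icc 0 T))
    (hF : IntegrableOn F (Icc 0 T)) (hF' : IntegrableOn F' (Icc 0 T))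
    (hrep : ∀ t ∈ Icc (0:ℝ) T, c t = ∫ s in (0:ℝ)..t, F s)
    (hrep' : ∀ t ∈ Icc (0:ℝ) T, c' t = ∫ s in (0:ℝ)..t, F' s)
    (hlip : ∀ᵐ s ∂(volume.restrict (Icc (0:ℝ) T)), ‖F' s - F s‖ ≤ Λ s * ‖c' s - c s‖) :
    ∀ t ∈ Icc (0:ℝ) T, c' t = c t := by
  intro t ht
  have hT0 : (0:ℝ) ≤ T := le_trans ht.1 ht.2
  have h0I : (0:ℝ) ∈ Icc (0:ℝ) T := ⟨le_rfl, hT0⟩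
  have huc : ContinuousOn (fun s => ‖c' s - c s‖) (Icc 0 T) := (hc'.sub hc).norm
  have hint : IntegrableOn (fun s => Λ s * ‖c' s - c s‖) (Icc 0 T) :=
    lam_mul_cont_integrableOn hΛ huc
  have hII : ∀ (g : ℝ → E), IntegrableOn g (Icc 0 T) → ∀ {α β : ℝ}, α ∈ Icc (0:ℝ) T →
      β ∈ Icc (0:ℝ) T → IntervalIntegrable g volume α β := by
    intro g hg α β hα hβ
    have h1 : IntervalIntegrable g volume 0 T := by
      apply MeasureTheory.IntegrableOn.intervalIntegrable
      rwa [uIcc_of_le hT0]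
    exact h1.mono_set (by rw [uIcc_of_le hT0]; exact uIcc_subset_Icc hα hβ)
  have hII' : ∀ {α β : ℝ}, α ∈ Icc (0:ℝ) T → β ∈ Icc (0:ℝ) T →
      IntervalIntegrable (fun s => Λ s * ‖c' s - c s‖) volume α β := by
    intro α β hα hβ
    have h1 : IntervalIntegrable (fun s => Λ s * ‖c' s - c s‖) volume 0 T := by
      apply MeasureTheory.IntegrableOn.intervalIntegrable
      rwa [uIcc_of_le hT0]
    exact h1.mono_set (by rw [uIcc_of_le hT0]; exact uIcc_subset_Icc hα hβ)
  have happ : ∀ σ ∈ Icc (0:ℝ) T, ‖c' σ - c σ‖ ≤ ∫ s in (0:ℝ)..σ, Λ s * ‖c' s - c s‖ := by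
    intro σ hσ
    have h1 : c' σ - c σ = ∫ s in (0:ℝ)..σ, (F' s - F s) := by
      rw [hrep σ hσ, hrep' σ hσ,
        intervalIntegral.integral_sub (hII F' hF' h0I hσ) (hII F hF h0I hσ)]
    rw [h1]
    exact norm_intervalIntegral_le_of_ae hσ
      ((hII F' hF' h0I hσ).sub (hII F hF h0I hσ)) (hII' h0I hσ) hlip
  have hz := gronwall_zero hΛ0 hΛ huc (fun σ _ => norm_nonneg _) hint happ t ht
  have h2 : c' t - c t = 0 := by
    rwa [← norm_eq_zero]
  exact sub_eq_zero.mp h2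

def IsCellSol {K : Type*} [MetricSpace K] [CompactSpace K] {N : ℕ}
    (T : ℝ) (ρ : C(K, ℝ)) (a : ℝ → Fin N → C(K, ℝ)) (b : ℝ → C(K, ℝ))
    (H : (Fin N → ℝ) → ℝ → ℝ → ℝ) (p : ℝ≥0∞) (c : ℝ → C(K, ℝ)) : Prop :=
  ContinuousOn c (Icc 0 T) ∧
  ∃ F : ℝ → C(K, ℝ),
    (∀ t ∈ Icc (0:ℝ) T, ∀ x : K,
      F t x = H (fun j => a t j x) (b t x) (c t x) * (1 - c t x / (1 - ρ x))) ∧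
    MemLp F p (volume.restrict (Icc 0 T)) ∧
    ∀ t ∈ Icc (0:ℝ) T, c t = ∫ s in (0:ℝ)..t, F s

/-- Solvability of the cell ODE (Lemma B.6 of the paper): under the stated positivity,
local Lipschitz and integrability assumptions on `H`, there is a unique continuous
solution `c : I → C(K,ℝ)` of `d_t c = H(a, b, c)(1 − c/(1 − ρ))` with `c(0) = 0`,
whose integrand lies in `L^p(I, C(K,ℝ))`, and it satisfies
`0 ≤ c(t)(x) ≤ 1 − ρ(x)` for all `t ∈ I`, `x ∈ K`. -/
theorem cell_ode_solvability
    {K : Type*} [MetricSpace K] [CompactSpace K]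
    {T : ℝ} (hT : 0 < T) {N : ℕ} (hN : 1 ≤ N)
    (ρ : C(K, ℝ)) {cP CP : ℝ} (hcP : 0 < cP) (hcPCP : cP < CP) (hCP : CP < 1)
    (hρ : ∀ x : K, ρ x ∈ Icc cP CP)
    (a : ℝ → Fin N → C(K, ℝ))
    (ha : AEStronglyMeasurable a (volume.restrict (Icc 0 T)))
    (ha0 : ∀ᵐ t ∂(volume.restrict (Icc (0:ℝ) T)), ∀ (j : Fin N) (x : K), 0 ≤ a t j x)
    (b : ℝ → C(K, ℝ)) (hb : ContinuousOn b (Icc 0 T))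
    (hb01 : ∀ t ∈ Icc (0:ℝ) T, ∀ x : K, b t x ∈ Icc (0:ℝ) 1)
    (H : (Fin N → ℝ) → ℝ → ℝ → ℝ)
    (hH : LocallyLipschitz (fun q : (Fin N → ℝ) × ℝ × ℝ => H q.1 q.2.1 q.2.2))
    (hHpos : ∀ (v : Fin N → ℝ) (y z : ℝ),
      (∀ j, 0 ≤ v j) → 0 ≤ y → 0 ≤ z → 0 ≤ H v y z)
    (p : ℝ≥0∞) (hp : 1 ≤ p)
    (hbound : ∀ B : Set C(K, ℝ), Bornology.IsBounded B →
      ∃ m L : ℝ → ℝ, MemLp m p (volume.restrict (Icc 0 T)) ∧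
        IntegrableOn L (Icc 0 T) ∧
        (∀ᵐ t ∂(volume.restrict (Icc (0:ℝ) T)), ∀ c' ∈ B, ∀ x : K,
          |H (fun j => a t j x) (b t x) (c' x)| ≤ m t) ∧
        (∀ᵐ t ∂(volume.restrict (Icc (0:ℝ) T)), ∀ c' ∈ B, ∀ c'' ∈ B, ∀ x : K,
          |H (fun j => a t j x) (b t x) (c' x) - H (fun j => a t j x) (b t x) (c'' x)|
            ≤ L t * ‖c' - c''‖)) :
    ∃ c : ℝ → C(K, ℝ),
      IsCellSol T ρ a b H p c ∧
      (∀ c' : ℝ → C(K, ℝ), IsCellSol T ρ a b H p c' → ∀ t ∈ Icc (0:ℝ) T, c' t = c t) ∧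
      ∀ t ∈ Icc (0:ℝ) T, ∀ x : K, 0 ≤ c t x ∧ c t x ≤ 1 - ρ x := by
  classical
  have hT0 : (0:ℝ) ≤ T := hT.le
  have h0I : (0:ℝ) ∈ Icc (0:ℝ) T := ⟨le_rfl, hT0⟩
  haveI hfin : IsFiniteMeasure (volume.restrict (Icc (0:ℝ) T)) := ⟨by
    rw [Measure.restrict_apply_univ]; exact measure_Icc_lt_top⟩
  have h1CP : (0:ℝ) < 1 - CP := by linarith
  -- the upper obstacle
  set r : C(K, ℝ) := (1 : C(K, ℝ)) - ρ with hrdef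
  have hr_apply : ∀ x, r x = 1 - ρ x := fun x => rfl
  have hr_pos : ∀ x, 0 < r x := fun x => by
    have := (hρ x).2; rw [hr_apply]; linarith
  have hr_lb : ∀ x, 1 - CP ≤ r x := fun x => by
    have := (hρ x).2; rw [hr_apply]; linarith
  have hr_ub : ∀ x, r x ≤ 1 := fun x => by
    have h1 := (hρ x).1; rw [hr_apply]; linarith
  -- truncation
  set π : C(K, ℝ) → C(K, ℝ) := fun u => (u ⊓ r) ⊔ 0 with hπdef
  have hπ_apply : ∀ u x, π u x = max (min (u x) (r x)) 0 := fun u x => rfl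
  have hπ_nonneg : ∀ u x, 0 ≤ π u x := fun u x => le_max_right _ _
  have hπ_le : ∀ u x, π u x ≤ r x := fun u x => max_le (min_le_right _ _) (hr_pos x).le
  have hπ_id : ∀ u : C(K, ℝ), (∀ x, 0 ≤ u x ∧ u x ≤ r x) → π u = u := by
    intro u hu; ext x
    rw [hπ_apply, min_eq_left (hu x).2, max_eq_left (hu x).1]
  have hπ_norm : ∀ u, ‖π u‖ ≤ 1 := by
    intro u
    rw [ContinuousMap.norm_le _ zero_le_one]
    intro x
    rw [Real.norm_eq_abs, abs_of_nonneg (hπ_nonneg u x)]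
    exact le_trans (hπ_le u x) (hr_ub x)
  have hπ_lip_pt : ∀ u v x, |π u x - π v x| ≤ ‖u - v‖ := by
    intro u v x
    have h1 : |π u x - π v x| ≤ |min (u x) (r x) - min (v x) (r x)| := by
      rw [hπ_apply, hπ_apply]; exact abs_max_sub_max_le_abs _ _ _
    have h2 : |min (u x) (r x) - min (v x) (r x)| ≤ max |u x - v x| |r x - r x| :=
      abs_min_sub_min_le_max _ _ _ _
    have h3 : |u x - v x| ≤ ‖u - v‖ := by
      have h4 := ContinuousMap.norm_coe_le_norm (u - v) x
      rwa [ContinuousMap.sub_apply, Real.norm_eq_abs] at h4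
    simp only [sub_self, abs_zero] at h2
    rw [max_eq_left (abs_nonneg _)] at h2
    linarith
  have hπ_lip : ∀ u v, ‖π u - π v‖ ≤ ‖u - v‖ := by
    intro u v
    rw [ContinuousMap.norm_le _ (norm_nonneg _)]
    intro x
    rw [ContinuousMap.sub_apply, Real.norm_eq_abs]
    exact hπ_lip_pt u v x
  have hπ_cont : Continuous π := by
    apply LipschitzWith.continuous (K := 1)
    apply LipschitzWith.of_dist_le_mul
    intro u v
    rw [NNReal.coe_one, one_mul, dist_eq_norm, dist_eq_norm]
    exact hπ_lip u v
  -- inverse obstacle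
  set invr : C(K, ℝ) := ⟨fun x => (r x)⁻¹, r.continuous.inv₀ (fun x => (hr_pos x).ne')⟩
    with hinvrdef
  have hinvr_apply : ∀ x, invr x = (r x)⁻¹ := fun x => rfl
  have hinvr_pos : ∀ x, 0 < invr x := fun x => inv_pos.2 (hr_pos x)
  have hinvr_le : ∀ x, invr x ≤ (1 - CP)⁻¹ := fun x => by
    rw [hinvr_apply]
    exact inv_anti₀ h1CP (hr_lb x)
  -- the field
  have hHcont : Continuous (fun q : (Fin N → ℝ) × ℝ × ℝ => H q.1 q.2.1 q.2.2) := hH.continuous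
  set Φ : (Fin N → C(K, ℝ)) × C(K, ℝ) × C(K, ℝ) → C(K, ℝ) := fun z =>
    (ContinuousMap.mk (fun x => H (fun j => z.1 j x) (z.2.1 x) (π z.2.2 x))
      (hHcont.comp ((continuous_pi (fun j => (z.1 j).continuous)).prodMk
        ((z.2.1).continuous.prodMk (π z.2.2).continuous))))
    * ((1 : C(K, ℝ)) - π z.2.2 * invr) with hΦdef
  have hΦ_apply : ∀ z x, Φ z x
      = H (fun j => z.1 j x) (z.2.1 x) (π z.2.2 x) * (1 - π z.2.2 x * invr x) :=
    fun z x => rfl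
  have hΦ_cont : Continuous Φ := by
    apply ContinuousMap.continuous_of_continuous_uncurry
    have he : (Function.uncurry fun z x => Φ z x)
        = fun w : ((Fin N → C(K, ℝ)) × C(K, ℝ) × C(K, ℝ)) × K =>
          H (fun j => w.1.1 j w.2) (w.1.2.1 w.2) (π w.1.2.2 w.2)
            * (1 - π w.1.2.2 w.2 * invr w.2) := rfl
    rw [he]
    have hπev : Continuous fun w : ((Fin N → C(K, ℝ)) × C(K, ℝ) × C(K, ℝ)) × K =>
        π w.1.2.2 w.2 :=
      ContinuousEval.continuous_eval.comp
        ((hπ_cont.comp (continuous_snd.comp (continuous_snd.comp continuous_fst))).prodMk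
          continuous_snd)
    apply Continuous.mul
    · have hmap : Continuous (fun w : ((Fin N → C(K, ℝ)) × C(K, ℝ) × C(K, ℝ)) × K =>
          ((fun j => w.1.1 j w.2, w.1.2.1 w.2, π w.1.2.2 w.2) : (Fin N → ℝ) × ℝ × ℝ)) := by
        apply Continuous.prodMk
        · apply continuous_pi
          intro j
          exact ContinuousEval.continuous_eval.comp
            (((continuous_apply j).comp (continuous_fst.comp continuous_fst)).prodMk
              continuous_snd)
        · exact (ContinuousEval.continuous_eval.comp
            ((continuous_fst.comp (continuous_snd.comp continuous_fst)).prodMk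
              continuous_snd)).prodMk hπev
      exact hHcont.comp hmap
    · exact continuous_const.sub
        (hπev.mul (invr.continuous.comp continuous_snd))

  -- integrability data on the unit ball
  obtain ⟨m, L, hm_mem, hL_int, hm_bd, hL_bd⟩ :=
    hbound (Metric.closedBall 0 1) Metric.isBounded_closedBall
  have hm_int : Integrable m (volume.restrict (Icc (0:ℝ) T)) := hm_mem.integrable hp
  set Λ : ℝ → ℝ := fun s => |L s| + |m s| * (1 - CP)⁻¹ with hΛdef
  have hΛ0 : ∀ s, 0 ≤ Λ s := fun s => by positivity
  have hΛ_int : IntegrableOn Λ (Icc 0 T) := hL_int.abs.add (hm_int.abs.mul_const _)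
  have hπ_ball : ∀ u : C(K,ℝ), π u ∈ Metric.closedBall (0 : C(K,ℝ)) 1 := by
    intro u; rw [Metric.mem_closedBall, dist_zero_right]; exact hπ_norm u
  have hfac0 : ∀ (u : C(K,ℝ)) (x : K), 0 ≤ 1 - π u x * invr x := by
    intro u x
    rw [hinvr_apply]
    have h1 : π u x * (r x)⁻¹ ≤ r x * (r x)⁻¹ :=
      mul_le_mul_of_nonneg_right (hπ_le u x) (inv_pos.2 (hr_pos x)).le
    rw [mul_inv_cancel₀ (hr_pos x).ne'] at h1
    linarith
  have hfac1 : ∀ (u : C(K,ℝ)) (x : K), 1 - π u x * invr x ≤ 1 := by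
    intro u x
    have h2 : 0 ≤ π u x * invr x := mul_nonneg (hπ_nonneg u x) (hinvr_pos x).le
    linarith
  have hG_bdd : ∀ᵐ s ∂(volume.restrict (Icc (0:ℝ) T)), ∀ u : C(K,ℝ),
      ‖Φ (a s, b s, u)‖ ≤ |m s| := by
    filter_upwards [hm_bd] with s hs
    intro u
    rw [ContinuousMap.norm_le _ (abs_nonneg _)]
    intro x
    rw [hΦ_apply, Real.norm_eq_abs, abs_mul]
    have h1 : |H (fun j => a s j x) (b s x) (π u x)| ≤ m s := hs (π u) (hπ_ball u) x
    have h2 : |1 - π u x * invr x| ≤ 1 := by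
      rw [abs_of_nonneg (hfac0 u x)]; exact hfac1 u x
    calc |H (fun j => a s j x) (b s x) (π u x)| * |1 - π u x * invr x|
        ≤ m s * 1 := mul_le_mul h1 h2 (abs_nonneg _) (le_trans (abs_nonneg _) h1)
      _ = m s := mul_one _
      _ ≤ |m s| := le_abs_self _
  have hG_lip : ∀ᵐ s ∂(volume.restrict (Icc (0:ℝ) T)), ∀ u v : C(K,ℝ),
      ‖Φ (a s, b s, u) - Φ (a s, b s, v)‖ ≤ Λ s * ‖u - v‖ := by
    filter_upwards [hm_bd, hL_bd] with s hsm hsL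
    intro u v
    rw [ContinuousMap.norm_le _ (mul_nonneg (hΛ0 s) (norm_nonneg _))]
    intro x
    rw [ContinuousMap.sub_apply, hΦ_apply, hΦ_apply, Real.norm_eq_abs]
    have hid : H (fun j => a s j x) (b s x) (π u x) * (1 - π u x * invr x)
        - H (fun j => a s j x) (b s x) (π v x) * (1 - π v x * invr x)
        = (H (fun j => a s j x) (b s x) (π u x) - H (fun j => a s j x) (b s x) (π v x))
            * (1 - π u x * invr x)
          + H (fun j => a s j x) (b s x) (π v x) * ((π v x - π u x) * invr x) := by ring
    rw [hid]
    have hLnn : 0 ≤ L s * ‖π u - π v‖ :=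
      le_trans (abs_nonneg _) (hsL (π u) (hπ_ball u) (π v) (hπ_ball v) x)
    have e1 : |(H (fun j => a s j x) (b s x) (π u x) - H (fun j => a s j x) (b s x) (π v x))
        * (1 - π u x * invr x)| ≤ |L s| * ‖u - v‖ := by
      rw [abs_mul]
      have h2 : |1 - π u x * invr x| ≤ 1 := by
        rw [abs_of_nonneg (hfac0 u x)]; exact hfac1 u x
      calc |H (fun j => a s j x) (b s x) (π u x) - H (fun j => a s j x) (b s x) (π v x)|
            * |1 - π u x * invr x|
          ≤ (L s * ‖π u - π v‖) * 1 :=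
            mul_le_mul (hsL (π u) (hπ_ball u) (π v) (hπ_ball v) x) h2 (abs_nonneg _) hLnn
        _ = L s * ‖π u - π v‖ := mul_one _
        _ ≤ |L s| * ‖u - v‖ :=
            mul_le_mul (le_abs_self _) (hπ_lip u v) (norm_nonneg _) (abs_nonneg _)
    have e2 : |H (fun j => a s j x) (b s x) (π v x) * ((π v x - π u x) * invr x)|
        ≤ |m s| * (‖u - v‖ * (1 - CP)⁻¹) := by
      rw [abs_mul, abs_mul]
      have h3 : |H (fun j => a s j x) (b s x) (π v x)| ≤ |m s| :=
        (hsm (π v) (hπ_ball v) x).trans (le_abs_self _)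
      have h4 : |π v x - π u x| ≤ ‖u - v‖ := by
        rw [abs_sub_comm]; exact hπ_lip_pt u v x
      have h5 : |invr x| ≤ (1 - CP)⁻¹ := by
        rw [abs_of_pos (hinvr_pos x)]; exact hinvr_le x
      exact mul_le_mul h3
        (mul_le_mul h4 h5 (abs_nonneg _) (norm_nonneg _))
        (by positivity) (abs_nonneg _)
    refine le_trans (abs_add_le _ _) ?_
    refine le_trans (add_le_add e1 e2) ?_
    apply le_of_eq
    simp only [hΛdef]
    ring
  have hG_aesm : ∀ c : ℝ → C(K,ℝ), Continuous c →
      AEStronglyMeasurable (fun s => Φ (a s, b s, c s)) (volume.restrict (Icc (0:ℝ) T)) := by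
    intro c hc
    exact hΦ_cont.comp_aestronglyMeasurable
      (ha.prodMk ((hb.aestronglyMeasurable measurableSet_Icc).prodMk
        hc.aestronglyMeasurable))
  obtain ⟨c, hc_cont, hc_eq⟩ := caratheodory_fixed_point hT (fun s u => Φ (a s, b s, u))
    hG_aesm hm_int.abs hG_bdd hΛ0 hΛ_int hG_lip
  set F : ℝ → C(K, ℝ) := fun s => Φ (a s, b s, c s) with hFdef
  have hF_aesm : AEStronglyMeasurable F (volume.restrict (Icc (0:ℝ) T)) := hG_aesm c hc_cont
  have hF_int : IntegrableOn F (Icc 0 T) := by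
    refine Integrable.mono' hm_int.abs hF_aesm ?_
    filter_upwards [hG_bdd] with s hs using hs (c s)
  have hF_II : ∀ {α β : ℝ}, α ∈ Icc (0:ℝ) T → β ∈ Icc (0:ℝ) T →
      IntervalIntegrable F volume α β := by
    intro α β hα hβ
    have h1 : IntervalIntegrable F volume 0 T := by
      apply MeasureTheory.IntegrableOn.intervalIntegrable
      rwa [uIcc_of_le hT0]
    exact h1.mono_set (by rw [uIcc_of_le hT0]; exact uIcc_subset_Icc hα hβ)
  -- invariance
  have hc_bound : ∀ t ∈ Icc (0:ℝ) T, ∀ x : K, 0 ≤ c t x ∧ c t x ≤ r x := by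
    have kk : ∀ x : K, ∀ t ∈ Icc (0:ℝ) T, 0 ≤ c t x ∧ c t x ≤ r x := by
      intro x
      set u : ℝ → ℝ := fun t => c t x with hudef
      set f : ℝ → ℝ := fun s => F s x with hfdef
      have hu_cont : Continuous u := (continuous_eval_const x).comp hc_cont
      have hf_aesm : AEStronglyMeasurable f (volume.restrict (Icc (0:ℝ) T)) :=
        (continuous_eval_const x).comp_aestronglyMeasurable hF_aesm
      have hf_int : IntegrableOn f (Icc 0 T) := by
        refine Integrable.mono' hm_int.abs hf_aesm ?_
        filter_upwards [hG_bdd] with s hs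
        exact le_trans (ContinuousMap.norm_coe_le_norm (F s) x) (hs (c s))
      have hf_II : IntervalIntegrable f volume 0 T := by
        apply MeasureTheory.IntegrableOn.intervalIntegrable
        rwa [uIcc_of_le hT0]
      have hrepr : ∀ t ∈ Icc (0:ℝ) T, u t = ∫ s in (0:ℝ)..t, f s := by
        intro t ht
        have h1 : c t = ∫ s in (0:ℝ)..t, F s := hc_eq t ht
        have h2 := ContinuousLinearMap.intervalIntegral_comp_comm
          (ContinuousMap.evalCLM ℝ x) (hF_II h0I ht)
        calc u t = (ContinuousMap.evalCLM ℝ x) (c t) := rfl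
          _ = (ContinuousMap.evalCLM ℝ x) (∫ s in (0:ℝ)..t, F s) := by rw [h1]
          _ = ∫ s in (0:ℝ)..t, (ContinuousMap.evalCLM ℝ x) (F s) := h2.symm
          _ = ∫ s in (0:ℝ)..t, f s := rfl
      have hlow : ∀ t ∈ Icc (0:ℝ) T, 0 ≤ u t := by
        intro t ht
        rw [hrepr t ht]
        apply integral_nonneg_of_ae_restrict ht.1
        apply ae_restrict_of_ae_restrict_of_subset (Icc_subset_Icc le_rfl ht.2)
        filter_upwards [ha0, ae_restrict_mem measurableSet_Icc] with s hsa hsI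
        have h3 : 0 ≤ H (fun j => a s j x) (b s x) (π (c s) x) :=
          hHpos _ _ _ (fun j => hsa j x) (hb01 s hsI x).1 (hπ_nonneg _ x)
        exact mul_nonneg h3 (hfac0 (c s) x)
      have hupp : ∀ t ∈ Icc (0:ℝ) T, u t ≤ r x := by
        apply primitive_le_of_vanish (hr_pos x) hu_cont.continuousOn hf_II hrepr
        intro s hs hgt
        have h4 : π (c s) x = r x := by
          rw [hπ_apply, min_eq_right (le_of_lt hgt), max_eq_left (hr_pos x).le]
        show Φ (a s, b s, c s) x = 0
        rw [hΦ_apply, h4, hinvr_apply, mul_inv_cancel₀ (hr_pos x).ne', sub_self, mul_zero]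
      intro t ht
      exact ⟨hlow t ht, hupp t ht⟩
    intro t ht x
    exact kk x t ht
  have hπc : ∀ t ∈ Icc (0:ℝ) T, π (c t) = c t :=
    fun t ht => hπ_id (c t) (fun x => hc_bound t ht x)
  have hFform : ∀ t ∈ Icc (0:ℝ) T, ∀ x : K,
      F t x = H (fun j => a t j x) (b t x) (c t x) * (1 - c t x / (1 - ρ x)) := by
    intro t ht x
    have h1 : π (c t) x = c t x := by rw [hπc t ht]
    show Φ (a t, b t, c t) x = _
    rw [hΦ_apply, h1, hinvr_apply, hr_apply, div_eq_mul_inv]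
  have hF_memLp : MemLp F p (volume.restrict (Icc 0 T)) := by
    apply hm_mem.of_le hF_aesm
    filter_upwards [hG_bdd] with s hs
    rw [Real.norm_eq_abs]
    exact hs (c s)
  have hsol : IsCellSol T ρ a b H p c := ⟨hc_cont.continuousOn, F, hFform, hF_memLp, hc_eq⟩
  have huniq : ∀ c' : ℝ → C(K, ℝ), IsCellSol T ρ a b H p c' →
      ∀ t ∈ Icc (0:ℝ) T, c' t = c t := by
    intro c' hs'
    obtain ⟨hc'_cont, F', hF'form, hF'_mem, hF'_eq⟩ := hs'
    obtain ⟨R1, hR1⟩ := isCompact_Icc.exists_bound_of_continuousOn hc'_cont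
    obtain ⟨R2, hR2⟩ := isCompact_Icc.exists_bound_of_continuousOn hc_cont.continuousOn
    set R := max R1 R2 with hRdef
    have hR1' : ∀ t ∈ Icc (0:ℝ) T, ‖c' t‖ ≤ R := fun t ht => (hR1 t ht).trans (le_max_left _ _)
    have hR2' : ∀ t ∈ Icc (0:ℝ) T, ‖c t‖ ≤ R := fun t ht => (hR2 t ht).trans (le_max_right _ _)
    have hRnn : 0 ≤ R := le_trans (norm_nonneg (c 0)) (hR2' 0 h0I)
    obtain ⟨m2, L2, hm2_mem, hL2_int, hm2_bd, hL2_bd⟩ :=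
      hbound (Metric.closedBall 0 R) Metric.isBounded_closedBall
    have hm2_int : Integrable m2 (volume.restrict (Icc (0:ℝ) T)) := hm2_mem.integrable hp
    set Λ2 : ℝ → ℝ := fun s => |L2 s| * (1 + R * (1 - CP)⁻¹) + |m2 s| * (1 - CP)⁻¹ with hΛ2def
    have hΛ2_0 : ∀ s, 0 ≤ Λ2 s := fun s => by positivity
    have hΛ2_int : IntegrableOn Λ2 (Icc 0 T) :=
      (hL2_int.abs.mul_const _).add (hm2_int.abs.mul_const _)
    have hF'_int : IntegrableOn F' (Icc 0 T) := hF'_mem.integrable hp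
    have hmem' : ∀ t ∈ Icc (0:ℝ) T, c' t ∈ Metric.closedBall (0:C(K,ℝ)) R := by
      intro t ht; rw [Metric.mem_closedBall, dist_zero_right]; exact hR1' t ht
    have hmem : ∀ t ∈ Icc (0:ℝ) T, c t ∈ Metric.closedBall (0:C(K,ℝ)) R := by
      intro t ht; rw [Metric.mem_closedBall, dist_zero_right]; exact hR2' t ht
    have hlip2 : ∀ᵐ s ∂(volume.restrict (Icc (0:ℝ) T)),
        ‖F' s - F s‖ ≤ Λ2 s * ‖c' s - c s‖ := by
      filter_upwards [ae_restrict_mem measurableSet_Icc, hm2_bd, hL2_bd] with s hsI hsm hsL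
      rw [ContinuousMap.norm_le _ (mul_nonneg (hΛ2_0 s) (norm_nonneg _))]
      intro x
      rw [ContinuousMap.sub_apply, Real.norm_eq_abs, hF'form s hsI x, hFform s hsI x]
      have hxnorm : ∀ (g : C(K,ℝ)), |g x| ≤ ‖g‖ := fun g => by
        have h0 := ContinuousMap.norm_coe_le_norm g x
        rwa [Real.norm_eq_abs] at h0
      have hΔ : |c' s x - c s x| ≤ ‖c' s - c s‖ := by
        have h0 := hxnorm (c' s - c s)
        rwa [ContinuousMap.sub_apply] at h0
      have hivpos : (0:ℝ) < (1 - ρ x)⁻¹ := by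
        rw [← hr_apply]; exact hinvr_pos x
      have hivle : (1 - ρ x)⁻¹ ≤ (1 - CP)⁻¹ := by
        have h0 := hinvr_le x
        rwa [hinvr_apply, hr_apply] at h0
      have hid : H (fun j => a s j x) (b s x) (c' s x) * (1 - c' s x / (1 - ρ x))
          - H (fun j => a s j x) (b s x) (c s x) * (1 - c s x / (1 - ρ x))
          = (H (fun j => a s j x) (b s x) (c' s x) - H (fun j => a s j x) (b s x) (c s x))
              * (1 - c' s x / (1 - ρ x))
            + H (fun j => a s j x) (b s x) (c s x) * ((c s x - c' s x) / (1 - ρ x)) := by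
        ring
      rw [hid]
      have hLnn : 0 ≤ L2 s * ‖c' s - c s‖ :=
        le_trans (abs_nonneg _) (hsL (c' s) (hmem' s hsI) (c s) (hmem s hsI) x)
      have hfacbd : |1 - c' s x / (1 - ρ x)| ≤ 1 + R * (1 - CP)⁻¹ := by
        have hy : |c' s x / (1 - ρ x)| ≤ R * (1 - CP)⁻¹ := by
          rw [div_eq_mul_inv, abs_mul]
          exact mul_le_mul ((hxnorm (c' s)).trans (hR1' s hsI))
            (by rwa [abs_of_pos hivpos]) (abs_nonneg _) hRnn
        calc |1 - c' s x / (1 - ρ x)| = |1 + -(c' s x / (1 - ρ x))| := by rw [sub_eq_add_neg]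
          _ ≤ |(1:ℝ)| + |-(c' s x / (1 - ρ x))| := abs_add_le _ _
          _ = 1 + |c' s x / (1 - ρ x)| := by rw [abs_neg, abs_one]
          _ ≤ 1 + R * (1 - CP)⁻¹ := by linarith
      have e1 : |(H (fun j => a s j x) (b s x) (c' s x) - H (fun j => a s j x) (b s x) (c s x))
          * (1 - c' s x / (1 - ρ x))| ≤ (|L2 s| * (1 + R * (1 - CP)⁻¹)) * ‖c' s - c s‖ := by
        rw [abs_mul]
        calc |H (fun j => a s j x) (b s x) (c' s x) - H (fun j => a s j x) (b s x) (c s x)|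
              * |1 - c' s x / (1 - ρ x)|
            ≤ (L2 s * ‖c' s - c s‖) * (1 + R * (1 - CP)⁻¹) :=
              mul_le_mul (hsL (c' s) (hmem' s hsI) (c s) (hmem s hsI) x) hfacbd
                (abs_nonneg _) hLnn
          _ ≤ (|L2 s| * ‖c' s - c s‖) * (1 + R * (1 - CP)⁻¹) := by
              apply mul_le_mul_of_nonneg_right _ (by positivity)
              exact mul_le_mul_of_nonneg_right (le_abs_self _) (norm_nonneg _)
          _ = (|L2 s| * (1 + R * (1 - CP)⁻¹)) * ‖c' s - c s‖ := by ring
      have e2 : |H (fun j => a s j x) (b s x) (c s x) * ((c s x - c' s x) / (1 - ρ x))|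
          ≤ (|m2 s| * (1 - CP)⁻¹) * ‖c' s - c s‖ := by
        rw [abs_mul, div_eq_mul_inv, abs_mul]
        have h3 : |H (fun j => a s j x) (b s x) (c s x)| ≤ |m2 s| :=
          (hsm (c s) (hmem s hsI) x).trans (le_abs_self _)
        have h4 : |c s x - c' s x| ≤ ‖c' s - c s‖ := by rw [abs_sub_comm]; exact hΔ
        have h5 : |(1 - ρ x)⁻¹| ≤ (1 - CP)⁻¹ := by rwa [abs_of_pos hivpos]
        calc |H (fun j => a s j x) (b s x) (c s x)| * (|c s x - c' s x| * |(1 - ρ x)⁻¹|)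
            ≤ |m2 s| * (‖c' s - c s‖ * (1 - CP)⁻¹) :=
              mul_le_mul h3 (mul_le_mul h4 h5 (abs_nonneg _) (norm_nonneg _))
                (by positivity) (abs_nonneg _)
          _ = (|m2 s| * (1 - CP)⁻¹) * ‖c' s - c s‖ := by ring
      refine le_trans (abs_add_le _ _) ?_
      refine le_trans (add_le_add e1 e2) ?_
      apply le_of_eq
      simp only [hΛ2def]
      ring
    exact integral_eq_unique hΛ2_0 hΛ2_int hc_cont.continuousOn hc'_cont hF_int hF'_int
      hc_eq hF'_eq hlip2
  refine ⟨c, hsol, huniq, ?_⟩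
  intro t ht x
  have h0 := hc_bound t ht x
  rwa [hr_apply] at h0
end
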